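/- arXiv:1906.01338 — 5 statements merged into one kernel-verified Lean document; each statement's English description precedes it below -/
import Mathlib

section
/- Let β ∈ (0,1), τ > 0, and u, v ∈ C¹([0,τ]). Then ∫₀^τ (∂^β_{(0,t]} u(t)) (v(t) − v(τ)) dt = ∫₀^τ (∂^β_{[t,τ)} v(t)) (u(t) − u(0)) dt, where ∂^β_{(0,t]} u(t) = (1/Γ(1−β)) ∫₀ᵗ u'(s)(t−s)^{−β} ds is the forward Caputo derivative and ∂^β_{[t,τ)} v(t) = −(1/Γ(1−β)) ∫ₜ^τ v'(s)(s−t)^{−β} ds is the backward Caputo derivative. -/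
open Set MeasureTheory Real

lemma tri_measurable (a b : ℝ) :
    MeasurableSet {p : ℝ × ℝ | a < p.1 ∧ p.1 < p.2 ∧ p.2 < b} := by
  apply MeasurableSet.inter
  · exact measurableSet_lt measurable_const measurable_fst
  · exact (measurableSet_lt measurable_fst measurable_snd).inter
      (measurableSet_lt measurable_snd measurable_const)

lemma tri_swap (a b : ℝ) (F : ℝ → ℝ → ℝ)
    (hF : IntegrableOn (fun p : ℝ × ℝ => F p.1 p.2)
      {p : ℝ × ℝ | a < p.1 ∧ p.1 < p.2 ∧ p.2 < b}) :
    (∫ t in Ioo a b, ∫ s in Ioo a t, F s t) = ∫ s in Ioo a b, ∫ t in Ioo s b, F s t := by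
  set T := {p : ℝ × ℝ | a < p.1 ∧ p.1 < p.2 ∧ p.2 < b} with hTdef
  have hT : MeasurableSet T := tri_measurable a b
  set G : ℝ × ℝ → ℝ := T.indicator (fun p => F p.1 p.2) with hGdef
  have hG : Integrable G := (integrable_indicator_iff hT).2 hF
  have h1 : (∫ t, ∫ s, G (s, t)) = ∫ t in Ioo a b, ∫ s in Ioo a t, F s t := by
    rw [← setIntegral_eq_integral_of_forall_compl_eq_zero (s := Ioo a b)
      (f := fun t => ∫ s, G (s, t)) ?_]
    · apply setIntegral_congr_fun measurableSet_Ioo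
      intro t ht
      have he : (fun s => G (s, t)) = (Ioo a t).indicator (fun s => F s t) := by
        funext s
        by_cases hs : s ∈ Ioo a t
        · rw [indicator_of_mem hs]
          exact indicator_of_mem (by exact ⟨hs.1, hs.2, ht.2⟩) _
        · rw [indicator_of_notMem hs]
          exact indicator_of_notMem (fun hc => hs ⟨hc.1, hc.2.1⟩) _
      show (∫ s, G (s, t)) = _
      rw [he, integral_indicator measurableSet_Ioo]
    · intro t ht
      have : ∀ s, G (s, t) = 0 := by
        intro s
        apply indicator_of_notMem
        intro hc
        exact ht ⟨lt_trans hc.1 hc.2.1, hc.2.2⟩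
      simp [this]
  have h2 : (∫ s, ∫ t, G (s, t)) = ∫ s in Ioo a b, ∫ t in Ioo s b, F s t := by
    rw [← setIntegral_eq_integral_of_forall_compl_eq_zero (s := Ioo a b)
      (f := fun s => ∫ t, G (s, t)) ?_]
    · apply setIntegral_congr_fun measurableSet_Ioo
      intro s hs
      have he : (fun t => G (s, t)) = (Ioo s b).indicator (fun t => F s t) := by
        funext t
        by_cases ht : t ∈ Ioo s b
        · rw [indicator_of_mem ht]
          exact indicator_of_mem (by exact ⟨hs.1, ht.1, ht.2⟩) _
        · rw [indicator_of_notMem ht]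
          exact indicator_of_notMem (fun hc => ht ⟨hc.2.1, hc.2.2⟩) _
      show (∫ t, G (s, t)) = _
      rw [he, integral_indicator measurableSet_Ioo]
    · intro s hs
      have : ∀ t, G (s, t) = 0 := by
        intro t
        apply indicator_of_notMem
        intro hc
        exact hs ⟨hc.1, lt_trans hc.2.1 hc.2.2⟩
      simp [this]
  rw [← h1, ← h2]
  exact (MeasureTheory.integral_integral_swap (f := fun s t => G (s, t))
    (by rw [← Measure.volume_eq_prod]; exact hG)).symm


lemma kernelB_integrableOn {β : ℝ} (hβ : β ∈ Set.Ioo (0:ℝ) 1) (a t : ℝ) :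
    IntegrableOn (fun s => (t - s) ^ (-β)) (Ioo a t) := by
  rcases le_or_gt t a with h | h
  · rw [Ioo_eq_empty h.not_gt]; exact integrableOn_empty
  · have h1 : IntervalIntegrable (fun x : ℝ => x ^ (-β)) volume 0 (t - a) :=
      intervalIntegral.intervalIntegrable_rpow' (by linarith [hβ.2] : (-1:ℝ) < -β)
    have h2 := h1.comp_sub_left t
    simp only [sub_zero, sub_sub_cancel] at h2
    exact ((intervalIntegrable_iff_integrableOn_Ioo_of_le h.le).mp h2.symm)

lemma kernelA_integrableOn {β : ℝ} (hβ : β ∈ Set.Ioo (0:ℝ) 1) (s r : ℝ) :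
    IntegrableOn (fun t => (t - s) ^ (-β)) (Ioo s r) := by
  rcases le_or_gt r s with h | h
  · rw [Ioo_eq_empty h.not_gt]; exact integrableOn_empty
  · have h1 : IntervalIntegrable (fun x : ℝ => x ^ (-β)) volume 0 (r - s) :=
      intervalIntegral.intervalIntegrable_rpow' (by linarith [hβ.2] : (-1:ℝ) < -β)
    have h2 := h1.comp_sub_right s
    simp only [zero_add, sub_add_cancel] at h2
    exact ((intervalIntegrable_iff_integrableOn_Ioo_of_le h.le).mp h2)

lemma kernelA_int {β : ℝ} (hβ : β ∈ Set.Ioo (0:ℝ) 1) {s r : ℝ} (h : s < r) :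
    ∫ t in Ioo s r, (t - s) ^ (-β) = (r - s) ^ (1 - β) / (1 - β) := by
  rw [← integral_Ioc_eq_integral_Ioo, ← intervalIntegral.integral_of_le h.le]
  rw [show (fun t : ℝ => (t - s) ^ (-β)) = fun t : ℝ => ((fun x : ℝ => x ^ (-β)) (t - s)) from rfl]
  rw [intervalIntegral.integral_comp_sub_right (fun x : ℝ => x ^ (-β)) s]
  rw [integral_rpow (Or.inl (by linarith [hβ.2] : (-1:ℝ) < -β))]
  rw [sub_self, Real.zero_rpow (fun hc => by linarith [hβ.2])]
  ring_nf

lemma kernelB_int {β : ℝ} (hβ : β ∈ Set.Ioo (0:ℝ) 1) {a t : ℝ} (h : a < t) :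
    ∫ s in Ioo a t, (t - s) ^ (-β) = (t - a) ^ (1 - β) / (1 - β) := by
  rw [← integral_Ioc_eq_integral_Ioo, ← intervalIntegral.integral_of_le h.le]
  rw [show (fun s' : ℝ => (t - s') ^ (-β)) = fun s' : ℝ => ((fun x : ℝ => x ^ (-β)) (t - s')) from rfl]
  rw [intervalIntegral.integral_comp_sub_left (fun x : ℝ => x ^ (-β)) t]
  rw [integral_rpow (Or.inl (by linarith [hβ.2] : (-1:ℝ) < -β))]
  rw [sub_self, Real.zero_rpow (fun hc => by linarith [hβ.2])]
  ring_nf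

-- strong measurability of K : t ↦ ∫ s in Ioo 0 t, U s * (t - s)^(-β)
lemma K_stronglyMeasurable {β : ℝ} (U : ℝ → ℝ) (hU : Measurable U) :
    StronglyMeasurable (fun t : ℝ => ∫ s in Ioo 0 t, U s * (t - s) ^ (-β)) := by
  have hS : MeasurableSet {p : ℝ × ℝ | 0 < p.2 ∧ p.2 < p.1} :=
    (measurableSet_lt measurable_const measurable_snd).inter
      (measurableSet_lt measurable_snd measurable_fst)
  have hg : Measurable fun p : ℝ × ℝ => U p.2 * (p.1 - p.2) ^ (-β) :=
    (hU.comp measurable_snd).mul ((measurable_fst.sub measurable_snd).pow measurable_const)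
  have key := ((hg.indicator hS).stronglyMeasurable).integral_prod_right'
    (ν := (volume : Measure ℝ))
  have he : (fun t : ℝ => ∫ s in Ioo 0 t, U s * (t - s) ^ (-β))
      = fun t : ℝ => ∫ s, ({p : ℝ × ℝ | 0 < p.2 ∧ p.2 < p.1}.indicator
          (fun p => U p.2 * (p.1 - p.2) ^ (-β))) (t, s) := by
    funext t
    rw [← integral_indicator measurableSet_Ioo]
    refine integral_congr_ae (Filter.Eventually.of_forall fun s => ?_)
    simp only [indicator_apply, mem_Ioo, mem_setOf_eq]
  rw [he]; exact key

-- strong measurability of L : t ↦ ∫ s in Ioo t τ, V s * (s - t)^(-β)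
lemma L_stronglyMeasurable {β τ : ℝ} (V : ℝ → ℝ) (hV : Measurable V) :
    StronglyMeasurable (fun t : ℝ => ∫ s in Ioo t τ, V s * (s - t) ^ (-β)) := by
  have hS : MeasurableSet {p : ℝ × ℝ | p.1 < p.2 ∧ p.2 < τ} :=
    (measurableSet_lt measurable_fst measurable_snd).inter
      (measurableSet_lt measurable_snd measurable_const)
  have hg : Measurable fun p : ℝ × ℝ => V p.2 * (p.2 - p.1) ^ (-β) :=
    (hV.comp measurable_snd).mul ((measurable_snd.sub measurable_fst).pow measurable_const)
  have key := ((hg.indicator hS).stronglyMeasurable).integral_prod_right'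
    (ν := (volume : Measure ℝ))
  have he : (fun t : ℝ => ∫ s in Ioo t τ, V s * (s - t) ^ (-β))
      = fun t : ℝ => ∫ s, ({p : ℝ × ℝ | p.1 < p.2 ∧ p.2 < τ}.indicator
          (fun p => V p.2 * (p.2 - p.1) ^ (-β))) (t, s) := by
    funext t
    rw [← integral_indicator measurableSet_Ioo]
    refine integral_congr_ae (Filter.Eventually.of_forall fun s => ?_)
    simp only [indicator_apply, mem_Ioo, mem_setOf_eq]
  rw [he]; exact key

-- integrability of s ↦ U s * (t-s)^(-β) on Ioo a t  (B-orientation)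
lemma UkB_integrableOn {β : ℝ} (hβ : β ∈ Set.Ioo (0:ℝ) 1) (U : ℝ → ℝ)
    (hU : Measurable U) (M : ℝ) (hM : ∀ s, ‖U s‖ ≤ M) (a t : ℝ) :
    IntegrableOn (fun s => U s * (t - s) ^ (-β)) (Ioo a t) := by
  apply Integrable.mono' ((kernelB_integrableOn hβ a t).const_mul M)
  · exact ((hU.mul ((measurable_const.sub measurable_id).pow
      measurable_const)).aestronglyMeasurable).restrict
  · filter_upwards [ae_restrict_mem measurableSet_Ioo] with s hs
    rw [norm_mul]
    have hk : (0:ℝ) ≤ (t - s) ^ (-β) := Real.rpow_nonneg (by linarith [hs.2]) _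
    rw [Real.norm_of_nonneg hk]
    exact mul_le_mul_of_nonneg_right (hM s) hk

-- integrability of s ↦ V s * (s-t)^(-β) on Ioo t b  (A-orientation)
lemma VkA_integrableOn {β : ℝ} (hβ : β ∈ Set.Ioo (0:ℝ) 1) (V : ℝ → ℝ)
    (hV : Measurable V) (M : ℝ) (hM : ∀ s, ‖V s‖ ≤ M) (t b : ℝ) :
    IntegrableOn (fun s => V s * (s - t) ^ (-β)) (Ioo t b) := by
  apply Integrable.mono' ((kernelA_integrableOn hβ t b).const_mul M)
  · exact ((hV.mul ((measurable_id.sub measurable_const).pow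
      measurable_const)).aestronglyMeasurable).restrict
  · filter_upwards [ae_restrict_mem measurableSet_Ioo] with s hs
    rw [norm_mul]
    have hk : (0:ℝ) ≤ (s - t) ^ (-β) := Real.rpow_nonneg (by linarith [hs.1]) _
    rw [Real.norm_of_nonneg hk]
    exact mul_le_mul_of_nonneg_right (hM s) hk

lemma K_bound {β τ : ℝ} (hβ : β ∈ Set.Ioo (0:ℝ) 1) (U : ℝ → ℝ) (hU : Measurable U)
    (M : ℝ) (hM : ∀ s, ‖U s‖ ≤ M) {t : ℝ} (ht0 : 0 < t) (htτ : t ≤ τ) :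
    ‖∫ s in Ioo 0 t, U s * (t - s) ^ (-β)‖ ≤ M * (τ ^ (1 - β) / (1 - β)) := by
  have hM0 : 0 ≤ M := le_trans (norm_nonneg _) (hM 0)
  calc ‖∫ s in Ioo 0 t, U s * (t - s) ^ (-β)‖
      ≤ ∫ s in Ioo 0 t, ‖U s * (t - s) ^ (-β)‖ := norm_integral_le_integral_norm _
    _ ≤ ∫ s in Ioo 0 t, M * (t - s) ^ (-β) := by
        apply setIntegral_mono_on ((UkB_integrableOn hβ U hU M hM 0 t).norm)
          ((kernelB_integrableOn hβ 0 t).const_mul M) measurableSet_Ioo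
        intro s hs
        rw [norm_mul]
        have hk : (0:ℝ) ≤ (t - s) ^ (-β) := Real.rpow_nonneg (by linarith [hs.2]) _
        rw [Real.norm_of_nonneg hk]
        exact mul_le_mul_of_nonneg_right (hM s) hk
    _ = M * ((t - 0) ^ (1 - β) / (1 - β)) := by
        rw [integral_const_mul, kernelB_int hβ ht0]
    _ ≤ M * (τ ^ (1 - β) / (1 - β)) := by
        apply mul_le_mul_of_nonneg_left _ hM0
        gcongr <;> linarith [hβ.2]

lemma L_bound {β τ : ℝ} (hβ : β ∈ Set.Ioo (0:ℝ) 1) (V : ℝ → ℝ) (hV : Measurable V)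
    (M : ℝ) (hM : ∀ s, ‖V s‖ ≤ M) {t : ℝ} (ht0 : 0 ≤ t) (htτ : t < τ) :
    ‖∫ s in Ioo t τ, V s * (s - t) ^ (-β)‖ ≤ M * (τ ^ (1 - β) / (1 - β)) := by
  have hM0 : 0 ≤ M := le_trans (norm_nonneg _) (hM 0)
  calc ‖∫ s in Ioo t τ, V s * (s - t) ^ (-β)‖
      ≤ ∫ s in Ioo t τ, ‖V s * (s - t) ^ (-β)‖ := norm_integral_le_integral_norm _
    _ ≤ ∫ s in Ioo t τ, M * (s - t) ^ (-β) := by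
        apply setIntegral_mono_on ((VkA_integrableOn hβ V hV M hM t τ).norm)
          ((kernelA_integrableOn hβ t τ).const_mul M) measurableSet_Ioo
        intro s hs
        rw [norm_mul]
        have hk : (0:ℝ) ≤ (s - t) ^ (-β) := Real.rpow_nonneg (by linarith [hs.1]) _
        rw [Real.norm_of_nonneg hk]
        exact mul_le_mul_of_nonneg_right (hM s) hk
    _ = M * ((τ - t) ^ (1 - β) / (1 - β)) := by
        rw [integral_const_mul, kernelA_int hβ htτ]
    _ ≤ M * (τ ^ (1 - β) / (1 - β)) := by
        apply mul_le_mul_of_nonneg_left _ hM0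
        gcongr <;> linarith [hβ.2]

lemma kernel_prod_integrableOn {β : ℝ} (hβ : β ∈ Set.Ioo (0:ℝ) 1) (a b : ℝ) :
    IntegrableOn (fun p : ℝ × ℝ => (p.2 - p.1) ^ (-β))
      {p : ℝ × ℝ | a < p.1 ∧ p.1 < p.2 ∧ p.2 < b} := by
  set f : ℝ × ℝ → ℝ := fun p => (p.2 - p.1) ^ (-β) with hfdef
  set T := {p : ℝ × ℝ | a < p.1 ∧ p.1 < p.2 ∧ p.2 < b} with hTdef
  have hT : MeasurableSet T := tri_measurable a b
  have hfm : Measurable f := (measurable_snd.sub measurable_fst).pow measurable_const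
  refine (integrable_indicator_iff hT).1 ?_
  rw [Measure.volume_eq_prod]
  have h1f : AEStronglyMeasurable (T.indicator f) (volume.prod volume) :=
    (hfm.indicator hT).aestronglyMeasurable
  -- slices
  have hslice : ∀ s t : ℝ, T.indicator f (s, t)
      = (if a < s then (Ioo s b).indicator (fun t' => (t' - s) ^ (-β)) else 0) t := by
    intro s t
    by_cases has : a < s
    · rw [if_pos has]
      by_cases ht : t ∈ Ioo s b
      · rw [indicator_of_mem ht]
        exact indicator_of_mem (by exact ⟨has, ht.1, ht.2⟩) f
      · rw [indicator_of_notMem ht]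
        exact indicator_of_notMem (fun hc => ht ⟨hc.2.1, hc.2.2⟩) f
    · rw [if_neg has]
      exact indicator_of_notMem (fun hc => has hc.1) f
  rw [integrable_prod_iff h1f]
  constructor
  · refine Filter.Eventually.of_forall (fun s => ?_)
    simp only [hslice]
    by_cases has : a < s
    · rw [if_pos has]
      exact (integrable_indicator_iff measurableSet_Ioo).2 (kernelA_integrableOn hβ s b)
    · rw [if_neg has]; exact integrable_zero _ _ _
  · apply Integrable.mono'
      (g := (Ioo a b).indicator (fun _ => (b - a) ^ (1 - β) / (1 - β)))
    · exact (integrable_indicator_iff measurableSet_Ioo).2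
        (integrableOn_const measure_Ioo_lt_top.ne)
    · exact h1f.norm.integral_prod_right'
    · refine Filter.Eventually.of_forall (fun s => ?_)
      by_cases hs : s ∈ Ioo a b
      · have key : ∫ t, ‖T.indicator f (s, t)‖
            = ∫ t in Ioo s b, (t - s) ^ (-β) := by
          have : (fun t => ‖T.indicator f (s, t)‖)
              = (Ioo s b).indicator (fun t => ‖(t - s) ^ (-β)‖) := by
            funext t
            rw [hslice s t, if_pos hs.1, norm_indicator_eq_indicator_norm]
          rw [this, integral_indicator measurableSet_Ioo]
          refine setIntegral_congr_fun measurableSet_Ioo (fun t ht => ?_)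
          exact Real.norm_of_nonneg (Real.rpow_nonneg (by linarith [ht.1]) _)
        rw [key, indicator_of_mem hs, kernelA_int hβ hs.2]
        rw [Real.norm_of_nonneg (by
          rw [← kernelA_int hβ hs.2]
          exact setIntegral_nonneg measurableSet_Ioo
            (fun t ht => Real.rpow_nonneg (by linarith [ht.1]) _))]
        obtain ⟨hs1, hs2⟩ := hs
        gcongr <;> linarith [hβ.2]
      · have key : ∀ t, T.indicator f (s, t) = 0 := by
          intro t
          rw [hslice s t]
          by_cases has : a < s
          · rw [if_pos has]
            refine indicator_of_notMem (fun hc => hs ⟨has, ?_⟩) _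
            · exact lt_trans hc.1 hc.2
          · rw [if_neg has]; rfl
        simp [key, indicator_of_notMem hs]
-- triangle integrability of U p.1 * kernel
lemma Uk_tri_integrableOn {β : ℝ} (hβ : β ∈ Set.Ioo (0:ℝ) 1) (U : ℝ → ℝ)
    (hU : Measurable U) (M : ℝ) (hM : ∀ s, ‖U s‖ ≤ M) (a b : ℝ) :
    IntegrableOn (fun p : ℝ × ℝ => U p.1 * (p.2 - p.1) ^ (-β))
      {p : ℝ × ℝ | a < p.1 ∧ p.1 < p.2 ∧ p.2 < b} := by
  apply Integrable.mono' ((kernel_prod_integrableOn hβ a b).const_mul M)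
  · exact (((hU.comp measurable_fst).mul
      ((measurable_snd.sub measurable_fst).pow measurable_const)).aestronglyMeasurable).restrict
  · filter_upwards [ae_restrict_mem (tri_measurable a b)] with p hp
    rw [norm_mul]
    have hk : (0:ℝ) ≤ (p.2 - p.1) ^ (-β) := Real.rpow_nonneg (by linarith [hp.2.1]) _
    rw [Real.norm_of_nonneg hk]
    exact mul_le_mul_of_nonneg_right (hM p.1) hk

lemma Vk_tri_integrableOn {β : ℝ} (hβ : β ∈ Set.Ioo (0:ℝ) 1) (V : ℝ → ℝ)
    (hV : Measurable V) (M : ℝ) (hM : ∀ s, ‖V s‖ ≤ M) (a b : ℝ) :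
    IntegrableOn (fun p : ℝ × ℝ => V p.2 * (p.2 - p.1) ^ (-β))
      {p : ℝ × ℝ | a < p.1 ∧ p.1 < p.2 ∧ p.2 < b} := by
  apply Integrable.mono' ((kernel_prod_integrableOn hβ a b).const_mul M)
  · exact (((hV.comp measurable_snd).mul
      ((measurable_snd.sub measurable_fst).pow measurable_const)).aestronglyMeasurable).restrict
  · filter_upwards [ae_restrict_mem (tri_measurable a b)] with p hp
    rw [norm_mul]
    have hk : (0:ℝ) ≤ (p.2 - p.1) ^ (-β) := Real.rpow_nonneg (by linarith [hp.2.1]) _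
    rw [Real.norm_of_nonneg hk]
    exact mul_le_mul_of_nonneg_right (hM p.2) hk

lemma tri_finite (a b : ℝ) :
    volume {p : ℝ × ℝ | a < p.1 ∧ p.1 < p.2 ∧ p.2 < b} ≠ ⊤ := by
  have hsub : {p : ℝ × ℝ | a < p.1 ∧ p.1 < p.2 ∧ p.2 < b} ⊆ Ioo a b ×ˢ Ioo a b :=
    fun p hp => ⟨⟨hp.1, lt_trans hp.2.1 hp.2.2⟩, lt_trans hp.1 hp.2.1, hp.2.2⟩
  have hfin : volume (Ioo a b ×ˢ Ioo a b) < ⊤ := by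
    rw [Measure.volume_eq_prod, Measure.prod_prod]
    exact ENNReal.mul_lt_top measure_Ioo_lt_top measure_Ioo_lt_top
  exact ((measure_mono hsub).trans_lt hfin).ne

lemma sideL {β τ : ℝ} (hβ : β ∈ Set.Ioo (0:ℝ) 1) (hτ : 0 < τ)
    (U V : ℝ → ℝ) (hUm : Measurable U) (hVm : Measurable V)
    (MU MV : ℝ) (hMU : ∀ s, ‖U s‖ ≤ MU) (hMV : ∀ s, ‖V s‖ ≤ MV) :
    (∫ t in Ioo 0 τ, (∫ s in Ioo 0 t, U s * (t - s) ^ (-β)) * (∫ r in Ioo t τ, V r))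
      = ∫ r in Ioo 0 τ, ∫ s in Ioo 0 r, U s * ((r - s) ^ (1 - β) / (1 - β)) * V r := by
  have hMV0 : 0 ≤ MV := le_trans (norm_nonneg _) (hMV 0)
  have hKV : IntegrableOn
      (fun p : ℝ × ℝ => (∫ s in Ioo 0 p.1, U s * (p.1 - s) ^ (-β)) * V p.2)
      {p : ℝ × ℝ | 0 < p.1 ∧ p.1 < p.2 ∧ p.2 < τ} := by
    apply Measure.integrableOn_of_bounded (M := MU * (τ ^ (1 - β) / (1 - β)) * MV)
      (tri_finite 0 τ)
    · exact (((K_stronglyMeasurable U hUm).measurable.comp measurable_fst).mul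
        (hVm.comp measurable_snd)).aestronglyMeasurable
    · filter_upwards [ae_restrict_mem (tri_measurable 0 τ)] with p hp
      rw [norm_mul]
      have hKb := K_bound hβ U hUm MU hMU hp.1 (le_of_lt (lt_trans hp.2.1 hp.2.2))
      exact mul_le_mul hKb (hMV p.2) (norm_nonneg _) (le_trans (norm_nonneg _) hKb)
  have h1 : (∫ t in Ioo 0 τ, (∫ s in Ioo 0 t, U s * (t - s) ^ (-β)) * (∫ r in Ioo t τ, V r))
      = ∫ t in Ioo 0 τ, ∫ r in Ioo t τ, (∫ s in Ioo 0 t, U s * (t - s) ^ (-β)) * V r := by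
    refine setIntegral_congr_fun measurableSet_Ioo fun t ht => ?_
    exact (integral_const_mul _ _).symm
  rw [h1, ← tri_swap 0 τ (fun t r => (∫ s in Ioo 0 t, U s * (t - s) ^ (-β)) * V r) hKV]
  refine setIntegral_congr_fun measurableSet_Ioo fun r hr => ?_
  show (∫ s in Ioo 0 r, (∫ s' in Ioo 0 s, U s' * (s - s') ^ (-β)) * V r)
      = ∫ s in Ioo 0 r, U s * ((r - s) ^ (1 - β) / (1 - β)) * V r
  rw [integral_mul_const,
    tri_swap 0 r (fun s t => U s * (t - s) ^ (-β))
      (Uk_tri_integrableOn hβ U hUm MU hMU 0 r),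
    ← integral_mul_const]
  refine setIntegral_congr_fun measurableSet_Ioo fun s hs => ?_
  show (∫ t in Ioo s r, U s * (t - s) ^ (-β)) * V r = U s * ((r - s) ^ (1 - β) / (1 - β)) * V r
  rw [integral_const_mul, kernelA_int hβ hs.2]

lemma sideR {β τ : ℝ} (hβ : β ∈ Set.Ioo (0:ℝ) 1) (hτ : 0 < τ)
    (U V : ℝ → ℝ) (hUm : Measurable U) (hVm : Measurable V)
    (MU MV : ℝ) (hMU : ∀ s, ‖U s‖ ≤ MU) (hMV : ∀ s, ‖V s‖ ≤ MV) :
    (∫ t in Ioo 0 τ, (∫ s in Ioo t τ, V s * (s - t) ^ (-β)) * (∫ r in Ioo 0 t, U r))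
      = ∫ r in Ioo 0 τ, ∫ s in Ioo r τ, U r * ((s - r) ^ (1 - β) / (1 - β)) * V s := by
  have hMU0 : 0 ≤ MU := le_trans (norm_nonneg _) (hMU 0)
  have hLU : IntegrableOn
      (fun p : ℝ × ℝ => (∫ s in Ioo p.2 τ, V s * (s - p.2) ^ (-β)) * U p.1)
      {p : ℝ × ℝ | 0 < p.1 ∧ p.1 < p.2 ∧ p.2 < τ} := by
    apply Measure.integrableOn_of_bounded (M := MV * (τ ^ (1 - β) / (1 - β)) * MU)
      (tri_finite 0 τ)
    · exact (((L_stronglyMeasurable V hVm).measurable.comp measurable_snd).mul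
        (hUm.comp measurable_fst)).aestronglyMeasurable
    · filter_upwards [ae_restrict_mem (tri_measurable 0 τ)] with p hp
      rw [norm_mul]
      have hLb := L_bound hβ V hVm MV hMV (le_of_lt (lt_trans hp.1 hp.2.1)) hp.2.2
      exact mul_le_mul hLb (hMU p.1) (norm_nonneg _) (le_trans (norm_nonneg _) hLb)
  have h1 : (∫ t in Ioo 0 τ, (∫ s in Ioo t τ, V s * (s - t) ^ (-β)) * (∫ r in Ioo 0 t, U r))
      = ∫ t in Ioo 0 τ, ∫ r in Ioo 0 t,
          (∫ s in Ioo t τ, V s * (s - t) ^ (-β)) * U r := by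
    refine setIntegral_congr_fun measurableSet_Ioo fun t ht => ?_
    exact (integral_const_mul _ _).symm
  rw [h1, tri_swap 0 τ (fun r t => (∫ s in Ioo t τ, V s * (s - t) ^ (-β)) * U r) hLU]
  refine setIntegral_congr_fun measurableSet_Ioo fun r hr => ?_
  show (∫ t in Ioo r τ, (∫ s in Ioo t τ, V s * (s - t) ^ (-β)) * U r)
      = ∫ s in Ioo r τ, U r * ((s - r) ^ (1 - β) / (1 - β)) * V s
  rw [integral_mul_const,
    ← tri_swap r τ (fun s t => V t * (t - s) ^ (-β))
      (Vk_tri_integrableOn hβ V hVm MV hMV r τ)]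
  have h2 : (∫ t in Ioo r τ, ∫ s in Ioo r t, V t * (t - s) ^ (-β))
      = ∫ t in Ioo r τ, V t * ((t - r) ^ (1 - β) / (1 - β)) := by
    refine setIntegral_congr_fun measurableSet_Ioo fun t ht => ?_
    show (∫ s in Ioo r t, V t * (t - s) ^ (-β)) = V t * ((t - r) ^ (1 - β) / (1 - β))
    rw [integral_const_mul, kernelB_int hβ ht.1]
  rw [h2, ← integral_mul_const]
  refine setIntegral_congr_fun measurableSet_Ioo fun s hs => ?_
  show V s * ((s - r) ^ (1 - β) / (1 - β)) * U r = U r * ((s - r) ^ (1 - β) / (1 - β)) * V s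
  ring

/-- Integration by parts formula relating forward and backward Caputo derivatives:
`∫₀^τ (∂^β_{(0,t]}u)(t)(v(t)−v(τ)) dt = ∫₀^τ (∂^β_{[t,τ)}v)(t)(u(t)−u(0)) dt`. -/
theorem caputo_int_by_parts (β τ : ℝ) (hβ : β ∈ Set.Ioo (0:ℝ) 1) (hτ : 0 < τ)
    (u v u' v' : ℝ → ℝ)
    (hu : ∀ t ∈ Set.Icc 0 τ, HasDerivAt u (u' t) t)
    (hu' : ContinuousOn u' (Set.Icc 0 τ))
    (hv : ∀ t ∈ Set.Icc 0 τ, HasDerivAt v (v' t) t)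
    (hv' : ContinuousOn v' (Set.Icc 0 τ)) :
    (∫ t in Set.Ioo 0 τ,
        ((1 / Real.Gamma (1 - β)) * ∫ s in Set.Ioo 0 t, u' s * (t - s) ^ (-β))
          * (v t - v τ))
      = ∫ t in Set.Ioo 0 τ,
          (-(1 / Real.Gamma (1 - β)) * ∫ s in Set.Ioo t τ, v' s * (s - t) ^ (-β))
            * (u t - u 0) := by
  set c : ℝ := 1 / Real.Gamma (1 - β) with hc
  -- clamped (continuous, globally bounded) versions of u' and v'
  set U : ℝ → ℝ := fun s => u' (min (max s 0) τ) with hUdef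
  set V : ℝ → ℝ := fun s => v' (min (max s 0) τ) with hVdef
  have hclamp : ∀ x : ℝ, min (max x 0) τ ∈ Icc 0 τ := fun x =>
    ⟨le_min (le_max_right x 0) hτ.le, min_le_right _ _⟩
  have hUc : Continuous U :=
    hu'.comp_continuous ((continuous_id.max continuous_const).min continuous_const) hclamp
  have hVc : Continuous V :=
    hv'.comp_continuous ((continuous_id.max continuous_const).min continuous_const) hclamp
  have hUeq : ∀ s ∈ Icc (0:ℝ) τ, U s = u' s := by
    intro s hs
    simp only [hUdef, max_eq_left hs.1, min_eq_left hs.2]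
  have hVeq : ∀ s ∈ Icc (0:ℝ) τ, V s = v' s := by
    intro s hs
    simp only [hVdef, max_eq_left hs.1, min_eq_left hs.2]
  obtain ⟨MU, hMU'⟩ := (isCompact_Icc : IsCompact (Icc (0:ℝ) τ)).exists_bound_of_continuousOn hu'
  obtain ⟨MV, hMV'⟩ := (isCompact_Icc : IsCompact (Icc (0:ℝ) τ)).exists_bound_of_continuousOn hv'
  have hMU : ∀ s, ‖U s‖ ≤ MU := fun s => hMU' _ (hclamp s)
  have hMV : ∀ s, ‖V s‖ ≤ MV := fun s => hMV' _ (hclamp s)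
  have hMU0 : 0 ≤ MU := le_trans (norm_nonneg _) (hMU 0)
  have hMV0 : 0 ≤ MV := le_trans (norm_nonneg _) (hMV 0)
  have hUm : Measurable U := hUc.measurable
  have hVm : Measurable V := hVc.measurable
  -- fundamental theorem of calculus facts
  have hvf : ∀ t ∈ Ioo (0:ℝ) τ, v t - v τ = -∫ r in Ioo t τ, V r := by
    intro t ht
    have hsub : Icc t τ ⊆ Icc 0 τ := Icc_subset_Icc ht.1.le le_rfl
    have hint : ∫ r in t..τ, v' r = v τ - v t := by
      apply intervalIntegral.integral_eq_sub_of_hasDerivAt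
      · intro x hx
        rw [uIcc_of_le ht.2.le] at hx
        exact hv x (hsub hx)
      · apply ContinuousOn.intervalIntegrable
        rw [uIcc_of_le ht.2.le]
        exact hv'.mono hsub
    have h2 : ∫ r in t..τ, v' r = ∫ r in Ioo t τ, V r := by
      rw [intervalIntegral.integral_of_le ht.2.le, integral_Ioc_eq_integral_Ioo]
      refine setIntegral_congr_fun measurableSet_Ioo fun r hr => ?_
      exact (hVeq r ⟨le_of_lt (lt_trans ht.1 hr.1), hr.2.le⟩).symm
    rw [← h2, hint]
    ring
  have huf : ∀ t ∈ Ioo (0:ℝ) τ, u t - u 0 = ∫ r in Ioo 0 t, U r := by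
    intro t ht
    have hsub : Icc 0 t ⊆ Icc 0 τ := Icc_subset_Icc le_rfl ht.2.le
    have hint : ∫ r in (0:ℝ)..t, u' r = u t - u 0 := by
      apply intervalIntegral.integral_eq_sub_of_hasDerivAt
      · intro x hx
        rw [uIcc_of_le ht.1.le] at hx
        exact hu x (hsub hx)
      · apply ContinuousOn.intervalIntegrable
        rw [uIcc_of_le ht.1.le]
        exact hu'.mono hsub
    have h2 : ∫ r in (0:ℝ)..t, u' r = ∫ r in Ioo 0 t, U r := by
      rw [intervalIntegral.integral_of_le ht.1.le, integral_Ioc_eq_integral_Ioo]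
      refine setIntegral_congr_fun measurableSet_Ioo fun r hr => ?_
      exact (hUeq r ⟨hr.1.le, le_of_lt (lt_of_lt_of_le hr.2 ht.2.le)⟩).symm
    rw [← h2, hint]
  -- integrability for the final swap
  have hκnn : (0:ℝ) ≤ τ ^ (1 - β) / (1 - β) :=
    div_nonneg (Real.rpow_nonneg hτ.le _) (by linarith [hβ.2])
  have hF : IntegrableOn
      (fun p : ℝ × ℝ => U p.1 * ((p.2 - p.1) ^ (1 - β) / (1 - β)) * V p.2)
      {p : ℝ × ℝ | 0 < p.1 ∧ p.1 < p.2 ∧ p.2 < τ} := by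
    apply Measure.integrableOn_of_bounded (M := MU * (τ ^ (1 - β) / (1 - β)) * MV)
      (tri_finite 0 τ)
    · exact (((hUm.comp measurable_fst).mul
        (((measurable_snd.sub measurable_fst).pow measurable_const).div_const _)).mul
        (hVm.comp measurable_snd)).aestronglyMeasurable
    · filter_upwards [ae_restrict_mem (tri_measurable 0 τ)] with p hp
      have hba : (0:ℝ) ≤ p.2 - p.1 := by linarith [hp.2.1]
      have hκ : (0:ℝ) ≤ (p.2 - p.1) ^ (1 - β) / (1 - β) :=
        div_nonneg (Real.rpow_nonneg hba _) (by linarith [hβ.2])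
      have hκle : (p.2 - p.1) ^ (1 - β) / (1 - β) ≤ τ ^ (1 - β) / (1 - β) := by
        gcongr <;> linarith [hβ.2, hp.1, hp.2.2]
      rw [norm_mul, norm_mul, Real.norm_of_nonneg hκ]
      exact mul_le_mul (mul_le_mul (hMU p.1) hκle hκ hMU0) (hMV p.2) (norm_nonneg _)
        (mul_nonneg hMU0 hκnn)
  calc
    (∫ t in Ioo 0 τ, (c * ∫ s in Ioo 0 t, u' s * (t - s) ^ (-β)) * (v t - v τ))
        = ∫ t in Ioo 0 τ, (-c) *
            ((∫ s in Ioo 0 t, U s * (t - s) ^ (-β)) * (∫ r in Ioo t τ, V r)) := by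
          refine setIntegral_congr_fun measurableSet_Ioo fun t ht => ?_
          show (c * ∫ s in Ioo 0 t, u' s * (t - s) ^ (-β)) * (v t - v τ) = _
          rw [show (∫ s in Ioo 0 t, u' s * (t - s) ^ (-β))
              = ∫ s in Ioo 0 t, U s * (t - s) ^ (-β) from
            (setIntegral_congr_fun measurableSet_Ioo fun s hs => by
              rw [hUeq s ⟨hs.1.le, le_of_lt (lt_trans hs.2 ht.2)⟩]).symm, hvf t ht]
          ring
    _ = (-c) * ∫ t in Ioo 0 τ,
            (∫ s in Ioo 0 t, U s * (t - s) ^ (-β)) * (∫ r in Ioo t τ, V r) :=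
          integral_const_mul _ _
    _ = (-c) * ∫ r in Ioo 0 τ, ∫ s in Ioo 0 r,
            U s * ((r - s) ^ (1 - β) / (1 - β)) * V r := by
          rw [sideL hβ hτ U V hUm hVm MU MV hMU hMV]
    _ = (-c) * ∫ r in Ioo 0 τ, ∫ s in Ioo r τ,
            U r * ((s - r) ^ (1 - β) / (1 - β)) * V s := by
          rw [tri_swap 0 τ (fun a b => U a * ((b - a) ^ (1 - β) / (1 - β)) * V b) hF]
    _ = (-c) * ∫ t in Ioo 0 τ,
            (∫ s in Ioo t τ, V s * (s - t) ^ (-β)) * (∫ r in Ioo 0 t, U r) := by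
          rw [sideR hβ hτ U V hUm hVm MU MV hMU hMV]
    _ = ∫ t in Ioo 0 τ, (-c) *
            ((∫ s in Ioo t τ, V s * (s - t) ^ (-β)) * (∫ r in Ioo 0 t, U r)) :=
          (integral_const_mul _ _).symm
    _ = ∫ t in Ioo 0 τ, (-c * ∫ s in Ioo t τ, v' s * (s - t) ^ (-β)) * (u t - u 0) := by
          refine setIntegral_congr_fun measurableSet_Ioo fun t ht => ?_
          show _ = (-c * ∫ s in Ioo t τ, v' s * (s - t) ^ (-β)) * (u t - u 0)
          rw [show (∫ s in Ioo t τ, v' s * (s - t) ^ (-β))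
              = ∫ s in Ioo t τ, V s * (s - t) ^ (-β) from
            (setIntegral_congr_fun measurableSet_Ioo fun s hs => by
              rw [hVeq s ⟨le_of_lt (lt_trans ht.1 hs.1), hs.2.le⟩]).symm, huf t ht]
          ring
end

section
/- Let β ∈ (0,1), τ > 0, and u, v ∈ C¹([0,τ]). Then ∫₀^τ v(t) ∂^β_{(0,t]} u(t) dt + u(0) (I^{1−β}_{[0,τ)} v)(0) = ∫₀^τ u(t) ∂^β_{[t,τ)} v(t) dt + v(τ) (I^{1−β}_{(0,τ]} u)(τ), where (I^{1−β}_{(0,t]} u)(t) = (1/Γ(1−β)) ∫₀ᵗ u(s)(t−s)^{−β} ds and (I^{1−β}_{(t,τ]} v)(t) = (1/Γ(1−β)) ∫ₜ^τ v(s)(s−t)^{−β} ds. -/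
open Set MeasureTheory Real

namespace CaputoIBP

lemma ker_intOn_right {γ : ℝ} (hγ : -1 < γ) (a b : ℝ) :
    IntegrableOn (fun t => (t - a) ^ γ) (Ioo a b) := by
  rcases le_or_gt b a with h | h
  · simp [Set.Ioo_eq_empty_of_le h]
  · have h1 : IntervalIntegrable (fun x : ℝ => x ^ γ) volume 0 (b - a) :=
      intervalIntegral.intervalIntegrable_rpow' hγ
    have h2 := h1.comp_sub_right a
    rw [zero_add] at h2
    have := (intervalIntegrable_iff_integrableOn_Ioc_of_le (by linarith : a ≤ b - a + a)).1 h2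
    rw [sub_add_cancel] at this
    exact this.mono_set Set.Ioo_subset_Ioc_self

lemma ker_intOn_left {γ : ℝ} (hγ : -1 < γ) (a b : ℝ) :
    IntegrableOn (fun s => (b - s) ^ γ) (Ioo a b) := by
  rcases le_or_gt b a with h | h
  · simp [Set.Ioo_eq_empty_of_le h]
  · have h1 : IntervalIntegrable (fun x : ℝ => x ^ γ) volume 0 (b - a) :=
      intervalIntegral.intervalIntegrable_rpow' hγ
    have h2 := h1.comp_sub_left b
    rw [sub_zero] at h2
    have := (intervalIntegrable_iff_integrableOn_Ioc_of_le (by linarith : b - (b - a) ≤ b)).1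
      h2.symm
    have h3 : b - (b - a) = a := by ring
    rw [h3] at this
    exact this.mono_set Set.Ioo_subset_Ioc_self

lemma ker_int_right {γ : ℝ} (hγ : -1 < γ) {a b : ℝ} (hab : a ≤ b) :
    ∫ t in Ioo a b, (t - a) ^ γ = (b - a) ^ (γ + 1) / (γ + 1) := by
  rw [← integral_Ioc_eq_integral_Ioo, ← intervalIntegral.integral_of_le hab,
    intervalIntegral.integral_comp_sub_right (fun x => x ^ γ) a]
  rw [show a - a = 0 by ring]
  rw [integral_rpow (Or.inl hγ)]
  rw [Real.zero_rpow (by linarith), sub_zero]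

lemma ker_int_left {γ : ℝ} (hγ : -1 < γ) {a b : ℝ} (hab : a ≤ b) :
    ∫ s in Ioo a b, (b - s) ^ γ = (b - a) ^ (γ + 1) / (γ + 1) := by
  rw [← integral_Ioc_eq_integral_Ioo, ← intervalIntegral.integral_of_le hab,
    intervalIntegral.integral_comp_sub_left (fun x => x ^ γ) b]
  rw [show b - b = 0 by ring]
  rw [integral_rpow (Or.inl hγ)]
  rw [Real.zero_rpow (by linarith), sub_zero]


lemma tri_swap {a b : ℝ} (H : ℝ → ℝ → ℝ)
    (hInt : Integrable
      (fun p : ℝ × ℝ => Set.indicator {q : ℝ × ℝ | q.1 < q.2} (fun q => H q.1 q.2) p)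
      ((volume.restrict (Ioo a b)).prod (volume.restrict (Ioo a b)))) :
    ∫ t in Ioo a b, ∫ s in Ioo a t, H s t = ∫ s in Ioo a b, ∫ t in Ioo s b, H s t := by
  set G : ℝ → ℝ → ℝ := fun s t =>
    Set.indicator {q : ℝ × ℝ | q.1 < q.2} (fun q => H q.1 q.2) (s, t) with hG
  have swap : (∫ s in Ioo a b, ∫ t in Ioo a b, G s t) = ∫ t in Ioo a b, ∫ s in Ioo a b, G s t :=
    MeasureTheory.integral_integral_swap hInt
  have h1 : (∫ t in Ioo a b, ∫ s in Ioo a b, G s t) = ∫ t in Ioo a b, ∫ s in Ioo a t, H s t := by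
    apply setIntegral_congr_fun measurableSet_Ioo
    intro t ht
    have : (fun s => G s t) = Set.indicator (Iio t) (fun s => H s t) := by
      funext s
      simp only [hG, Set.indicator_apply, Set.mem_setOf_eq, Set.mem_Iio]
    show (∫ s in Ioo a b, G s t) = _
    rw [this, setIntegral_indicator measurableSet_Iio]
    have hset : Ioo a b ∩ Iio t = Ioo a t := by
      ext x
      simp only [Set.mem_inter_iff, Set.mem_Ioo, Set.mem_Iio]
      constructor
      · rintro ⟨⟨h1, h2⟩, h3⟩; exact ⟨h1, h3⟩
      · rintro ⟨h1, h3⟩; exact ⟨⟨h1, h3.trans ht.2⟩, h3⟩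
    rw [hset]
  have h2 : (∫ s in Ioo a b, ∫ t in Ioo a b, G s t) = ∫ s in Ioo a b, ∫ t in Ioo s b, H s t := by
    apply setIntegral_congr_fun measurableSet_Ioo
    intro s hs
    have : (fun t => G s t) = Set.indicator (Ioi s) (fun t => H s t) := by
      funext t
      simp only [hG, Set.indicator_apply, Set.mem_setOf_eq, Set.mem_Ioi]
    show (∫ t in Ioo a b, G s t) = _
    rw [this, setIntegral_indicator measurableSet_Ioi]
    have hset : Ioo a b ∩ Ioi s = Ioo s b := by
      ext x
      simp only [Set.mem_inter_iff, Set.mem_Ioo, Set.mem_Ioi]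
      constructor
      · rintro ⟨⟨h1, h2⟩, h3⟩; exact ⟨h3, h2⟩
      · rintro ⟨h1, h3⟩; exact ⟨⟨hs.1.trans h1, h3⟩, h1⟩
    rw [hset]
  rw [← h1, ← swap, h2]

lemma intA {τ γ : ℝ} (hγ : -1 < γ) (hτ : 0 ≤ τ) (f g : ℝ → ℝ)
    (hfm : Measurable f) (hgm : Measurable g)
    (Cf Cg : ℝ) (hfb : ∀ x, ‖f x‖ ≤ Cf) (hgb : ∀ x, ‖g x‖ ≤ Cg) :
    Integrable (fun p : ℝ × ℝ => Set.indicator {q : ℝ × ℝ | q.1 < q.2}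
      (fun q => f q.1 * g q.2 * (q.2 - q.1) ^ γ) p)
      ((volume.restrict (Ioo 0 τ)).prod (volume.restrict (Ioo 0 τ))) := by
  have hCf : 0 ≤ Cf := le_trans (norm_nonneg _) (hfb 0)
  have hCg : 0 ≤ Cg := le_trans (norm_nonneg _) (hgb 0)
  set μ := volume.restrict (Ioo (0:ℝ) τ) with hμ
  haveI : IsFiniteMeasure μ := by
    constructor
    rw [Measure.restrict_apply_univ]
    exact measure_Ioo_lt_top
  have hS : MeasurableSet {q : ℝ × ℝ | q.1 < q.2} := measurableSet_lt measurable_fst measurable_snd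
  have hFm : Measurable (fun q : ℝ × ℝ => f q.1 * g q.2 * (q.2 - q.1) ^ γ) := by
    have : Measurable (fun q : ℝ × ℝ => (q.2 - q.1) ^ γ) := by fun_prop
    exact ((hfm.comp measurable_fst).mul (hgm.comp measurable_snd)).mul this
  have hmeas : Measurable (fun p : ℝ × ℝ => Set.indicator {q : ℝ × ℝ | q.1 < q.2}
      (fun q => f q.1 * g q.2 * (q.2 - q.1) ^ γ) p) := hFm.indicator hS
  rw [integrable_prod_iff hmeas.aestronglyMeasurable]
  have hsetA : ∀ s ∈ Ioo (0:ℝ) τ, Ioi s ∩ Ioo 0 τ = Ioo s τ := by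
    intro s hs
    ext x
    simp only [Set.mem_inter_iff, Set.mem_Ioi, Set.mem_Ioo]
    constructor
    · rintro ⟨h1, h2, h3⟩; exact ⟨h1, h3⟩
    · rintro ⟨h1, h3⟩; exact ⟨h1, hs.1.trans h1, h3⟩
  have hslice : ∀ s ∈ Ioo (0:ℝ) τ, (fun t => Set.indicator {q : ℝ × ℝ | q.1 < q.2}
      (fun q => f q.1 * g q.2 * (q.2 - q.1) ^ γ) (s, t))
      = Set.indicator (Ioi s) (fun t => f s * g t * (t - s) ^ γ) := by
    intro s _
    funext t
    simp only [Set.indicator_apply, Set.mem_setOf_eq, Set.mem_Ioi]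
  have hker : ∀ s ∈ Ioo (0:ℝ) τ,
      IntegrableOn (fun t => (t - s) ^ γ) (Ioi s) μ := by
    intro s hs
    rw [IntegrableOn, hμ, Measure.restrict_restrict measurableSet_Ioi, hsetA s hs]
    exact ker_intOn_right hγ s τ
  constructor
  · filter_upwards [ae_restrict_mem measurableSet_Ioo] with s hs
    rw [hslice s hs, integrable_indicator_iff measurableSet_Ioi]
    refine Integrable.bdd_mul (c := Cf * Cg) (hker s hs) ?_ (Filter.Eventually.of_forall fun t => ?_)
    · exact (measurable_const.mul hgm).aestronglyMeasurable
    · rw [norm_mul]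
      exact mul_le_mul (hfb s) (hgb t) (norm_nonneg _) hCf
  · apply Integrable.mono' (integrable_const (Cf * Cg * (τ ^ (γ + 1) / (γ + 1))))
    · exact hmeas.norm.aestronglyMeasurable.integral_prod_right'
    · filter_upwards [ae_restrict_mem measurableSet_Ioo] with s hs
      rw [Real.norm_eq_abs, abs_of_nonneg (integral_nonneg fun t => norm_nonneg _)]
      have hbint : Integrable
          (fun t => Cf * Cg * Set.indicator (Ioi s) (fun t => (t - s) ^ γ) t) μ := by
        exact ((integrable_indicator_iff measurableSet_Ioi).2 (hker s hs)).const_mul _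
      have hpt : ∀ t, ‖Set.indicator {q : ℝ × ℝ | q.1 < q.2}
          (fun q => f q.1 * g q.2 * (q.2 - q.1) ^ γ) (s, t)‖
          ≤ Cf * Cg * Set.indicator (Ioi s) (fun t => (t - s) ^ γ) t := by
        intro t
        rcases lt_or_ge s t with h | h
        · rw [Set.indicator_of_mem (show (s,t) ∈ {q : ℝ × ℝ | q.1 < q.2} from h),
            Set.indicator_of_mem (Set.mem_Ioi.2 h)]
          have hk : (0:ℝ) ≤ (t - s) ^ γ := Real.rpow_nonneg (by linarith) γ
          rw [norm_mul, norm_mul, Real.norm_eq_abs ((t - s) ^ γ), abs_of_nonneg hk]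
          calc ‖f s‖ * ‖g t‖ * (t - s) ^ γ ≤ Cf * Cg * (t - s) ^ γ := by
                apply mul_le_mul_of_nonneg_right _ hk
                exact mul_le_mul (hfb s) (hgb t) (norm_nonneg _) hCf
            _ = Cf * Cg * (t - s) ^ γ := rfl
        · rw [Set.indicator_of_notMem (show (s,t) ∉ {q : ℝ × ℝ | q.1 < q.2} from not_lt.2 h),
            Set.indicator_of_notMem (by simp [Set.mem_Ioi]; exact h)]
          simp
      calc (∫ t, ‖Set.indicator {q : ℝ × ℝ | q.1 < q.2}
            (fun q => f q.1 * g q.2 * (q.2 - q.1) ^ γ) (s, t)‖ ∂μ)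
          ≤ ∫ t, Cf * Cg * Set.indicator (Ioi s) (fun t => (t - s) ^ γ) t ∂μ := by
            exact integral_mono_of_nonneg (Filter.Eventually.of_forall fun t => norm_nonneg _)
              hbint (Filter.Eventually.of_forall hpt)
        _ = Cf * Cg * ((τ - s) ^ (γ + 1) / (γ + 1)) := by
            rw [integral_const_mul]
            congr 1
            rw [hμ, setIntegral_indicator measurableSet_Ioi]
            have : Ioo (0:ℝ) τ ∩ Ioi s = Ioo s τ := by
              rw [Set.inter_comm]; exact hsetA s hs
            rw [this, ker_int_right hγ hs.2.le]
        _ ≤ Cf * Cg * (τ ^ (γ + 1) / (γ + 1)) := by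
            apply mul_le_mul_of_nonneg_left _ (mul_nonneg hCf hCg)
            have h1 : (τ - s) ^ (γ + 1) ≤ τ ^ (γ + 1) :=
              Real.rpow_le_rpow (by linarith [hs.2]) (by linarith [hs.1]) (by linarith)
            gcongr
            linarith

section pkg

variable {τ γ : ℝ} (hγ : -1 < γ) (hτ : 0 ≤ τ) (f g : ℝ → ℝ)
    (hfm : Measurable f) (hgm : Measurable g)
    (Cf Cg : ℝ) (hfb : ∀ x, ‖f x‖ ≤ Cf) (hgb : ∀ x, ‖g x‖ ≤ Cg)

include hγ hτ hfm hgm hfb hgb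

lemma pkgA_swap :
    ∫ t in Ioo 0 τ, g t * ∫ s in Ioo 0 t, f s * (t - s) ^ γ
      = ∫ s in Ioo 0 τ, f s * ∫ t in Ioo s τ, g t * (t - s) ^ γ := by
  have h := tri_swap (a := 0) (b := τ) (fun s t => f s * g t * (t - s) ^ γ)
    (intA hγ hτ f g hfm hgm Cf Cg hfb hgb)
  calc ∫ t in Ioo 0 τ, g t * ∫ s in Ioo 0 t, f s * (t - s) ^ γ
      = ∫ t in Ioo 0 τ, ∫ s in Ioo 0 t, f s * g t * (t - s) ^ γ := by
        apply setIntegral_congr_fun measurableSet_Ioo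
        intro t ht
        show g t * ∫ s in Ioo 0 t, f s * (t - s) ^ γ = ∫ s in Ioo 0 t, f s * g t * (t - s) ^ γ
        rw [← integral_const_mul]
        apply setIntegral_congr_fun measurableSet_Ioo
        intro s hs; show g t * (f s * (t - s) ^ γ) = f s * g t * (t - s) ^ γ; ring
    _ = ∫ s in Ioo 0 τ, ∫ t in Ioo s τ, f s * g t * (t - s) ^ γ := h
    _ = ∫ s in Ioo 0 τ, f s * ∫ t in Ioo s τ, g t * (t - s) ^ γ := by
        apply setIntegral_congr_fun measurableSet_Ioo
        intro s hs
        show (∫ t in Ioo s τ, f s * g t * (t - s) ^ γ) = f s * ∫ t in Ioo s τ, g t * (t - s) ^ γ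
        rw [← integral_const_mul]
        apply setIntegral_congr_fun measurableSet_Ioo
        intro t ht; show f s * g t * (t - s) ^ γ = f s * (g t * (t - s) ^ γ); ring

lemma pkgA_margL :
    IntegrableOn (fun s => f s * ∫ t in Ioo s τ, g t * (t - s) ^ γ) (Ioo 0 τ) := by
  have h := (intA hγ hτ f g hfm hgm Cf Cg hfb hgb).integral_prod_left
  apply h.congr
  filter_upwards [ae_restrict_mem measurableSet_Ioo] with s hs
  have e0 : (fun t => Set.indicator {q : ℝ × ℝ | q.1 < q.2}
      (fun q => f q.1 * g q.2 * (q.2 - q.1) ^ γ) (s, t))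
      = Set.indicator (Ioi s) (fun t => f s * g t * (t - s) ^ γ) := by
    funext t
    simp only [Set.indicator_apply, Set.mem_setOf_eq, Set.mem_Ioi]
  show (∫ t, Set.indicator {q : ℝ × ℝ | q.1 < q.2}
      (fun q => f q.1 * g q.2 * (q.2 - q.1) ^ γ) (s, t) ∂(volume.restrict (Ioo 0 τ)))
      = f s * ∫ t in Ioo s τ, g t * (t - s) ^ γ
  rw [e0, integral_indicator measurableSet_Ioi,
    Measure.restrict_restrict measurableSet_Ioi]
  have hset : Ioi s ∩ Ioo 0 τ = Ioo s τ := by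
    ext x
    simp only [Set.mem_inter_iff, Set.mem_Ioi, Set.mem_Ioo]
    exact ⟨fun ⟨h1, _, h3⟩ => ⟨h1, h3⟩, fun ⟨h1, h3⟩ => ⟨h1, hs.1.trans h1, h3⟩⟩
  rw [hset, ← integral_const_mul]
  apply setIntegral_congr_fun measurableSet_Ioo
  intro t ht; show f s * g t * (t - s) ^ γ = f s * (g t * (t - s) ^ γ); ring

lemma pkgA_margR :
    IntegrableOn (fun t => g t * ∫ s in Ioo 0 t, f s * (t - s) ^ γ) (Ioo 0 τ) := by
  have h := (intA hγ hτ f g hfm hgm Cf Cg hfb hgb).integral_prod_right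
  apply h.congr
  filter_upwards [ae_restrict_mem measurableSet_Ioo] with t ht
  have e0 : (fun s => Set.indicator {q : ℝ × ℝ | q.1 < q.2}
      (fun q => f q.1 * g q.2 * (q.2 - q.1) ^ γ) (s, t))
      = Set.indicator (Iio t) (fun s => f s * g t * (t - s) ^ γ) := by
    funext s
    simp only [Set.indicator_apply, Set.mem_setOf_eq, Set.mem_Iio]
  show (∫ s, Set.indicator {q : ℝ × ℝ | q.1 < q.2}
      (fun q => f q.1 * g q.2 * (q.2 - q.1) ^ γ) (s, t) ∂(volume.restrict (Ioo 0 τ)))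
      = g t * ∫ s in Ioo 0 t, f s * (t - s) ^ γ
  rw [e0, integral_indicator measurableSet_Iio,
    Measure.restrict_restrict measurableSet_Iio]
  have hset : Iio t ∩ Ioo 0 τ = Ioo 0 t := by
    ext x
    simp only [Set.mem_inter_iff, Set.mem_Iio, Set.mem_Ioo]
    exact ⟨fun ⟨h1, h2, _⟩ => ⟨h2, h1⟩, fun ⟨h2, h1⟩ => ⟨h1, h2, h1.trans ht.2⟩⟩
  rw [hset, ← integral_const_mul]
  apply setIntegral_congr_fun measurableSet_Ioo
  intro s hs; show f s * g t * (t - s) ^ γ = g t * (f s * (t - s) ^ γ); ring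

end pkg

lemma swapB1 {a b : ℝ} (f w : ℝ → ℝ) (hf : IntegrableOn f (Ioo a b))
    (hw : IntegrableOn w (Ioo a b)) :
    ∫ t in Ioo a b, (∫ r in Ioo a t, f r) * w t
      = ∫ r in Ioo a b, f r * ∫ t in Ioo r b, w t := by
  have hInt : Integrable
      (fun p : ℝ × ℝ => Set.indicator {q : ℝ × ℝ | q.1 < q.2} (fun q => f q.1 * w q.2) p)
      ((volume.restrict (Ioo a b)).prod (volume.restrict (Ioo a b))) :=
    (hf.mul_prod hw).indicator (measurableSet_lt measurable_fst measurable_snd)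
  have h := tri_swap (fun r t => f r * w t) hInt
  calc ∫ t in Ioo a b, (∫ r in Ioo a t, f r) * w t
      = ∫ t in Ioo a b, ∫ r in Ioo a t, f r * w t := by
        apply setIntegral_congr_fun measurableSet_Ioo
        intro t ht
        show (∫ r in Ioo a t, f r) * w t = ∫ r in Ioo a t, f r * w t
        rw [integral_mul_const]
    _ = ∫ r in Ioo a b, ∫ t in Ioo r b, f r * w t := h
    _ = ∫ r in Ioo a b, f r * ∫ t in Ioo r b, w t := by
        apply setIntegral_congr_fun measurableSet_Ioo
        intro r hr
        show (∫ t in Ioo r b, f r * w t) = f r * ∫ t in Ioo r b, w t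
        rw [integral_const_mul]

lemma swapB2 {a b : ℝ} (f w : ℝ → ℝ) (hf : IntegrableOn f (Ioo a b))
    (hw : IntegrableOn w (Ioo a b)) :
    ∫ t in Ioo a b, w t * (∫ r in Ioo t b, f r)
      = ∫ r in Ioo a b, (∫ t in Ioo a r, w t) * f r := by
  have hInt : Integrable
      (fun p : ℝ × ℝ => Set.indicator {q : ℝ × ℝ | q.1 < q.2} (fun q => w q.1 * f q.2) p)
      ((volume.restrict (Ioo a b)).prod (volume.restrict (Ioo a b))) :=
    (hw.mul_prod hf).indicator (measurableSet_lt measurable_fst measurable_snd)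
  have h := tri_swap (fun t r => w t * f r) hInt
  calc ∫ t in Ioo a b, w t * (∫ r in Ioo t b, f r)
      = ∫ t in Ioo a b, ∫ r in Ioo t b, w t * f r := by
        apply setIntegral_congr_fun measurableSet_Ioo
        intro t ht
        show w t * (∫ r in Ioo t b, f r) = ∫ r in Ioo t b, w t * f r
        rw [integral_const_mul]
    _ = ∫ r in Ioo a b, ∫ t in Ioo a r, w t * f r := h.symm
    _ = ∫ r in Ioo a b, (∫ t in Ioo a r, w t) * f r := by
        apply setIntegral_congr_fun measurableSet_Ioo
        intro r hr
        show (∫ t in Ioo a r, w t * f r) = (∫ t in Ioo a r, w t) * f r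
        rw [integral_mul_const]

lemma ftc (a b τ : ℝ) (h0 : 0 ≤ a) (hab : a ≤ b) (hbτ : b ≤ τ) (u u' : ℝ → ℝ)
    (hu : ∀ x ∈ Icc 0 τ, HasDerivAt u (u' x) x) (hu' : ContinuousOn u' (Icc 0 τ)) :
    ∫ s in Ioo a b, u' s = u b - u a := by
  have hsub : Icc a b ⊆ Icc 0 τ := Set.Icc_subset_Icc h0 hbτ
  have hint : IntervalIntegrable u' volume a b := by
    apply ContinuousOn.intervalIntegrable
    rw [Set.uIcc_of_le hab]
    exact hu'.mono hsub
  have h := intervalIntegral.integral_eq_sub_of_hasDerivAt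
    (f := u) (f' := u') (a := a) (b := b)
    (fun x hx => hu x (hsub (by rwa [Set.uIcc_of_le hab] at hx))) hint
  rw [intervalIntegral.integral_of_le hab, integral_Ioc_eq_integral_Ioo] at h
  exact h

theorem aux (β τ : ℝ) (hβ : β ∈ Set.Ioo (0:ℝ) 1) (hτ : 0 < τ)
    (u v u' v' : ℝ → ℝ)
    (hum : Continuous u) (hvm : Continuous v) (hu'm : Continuous u') (hv'm : Continuous v')
    (Cu Cv Cu' Cv' : ℝ)
    (hub : ∀ x, ‖u x‖ ≤ Cu) (hvb : ∀ x, ‖v x‖ ≤ Cv)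
    (hu'b : ∀ x, ‖u' x‖ ≤ Cu') (hv'b : ∀ x, ‖v' x‖ ≤ Cv')
    (hftcu : ∀ a b : ℝ, 0 ≤ a → a ≤ b → b ≤ τ → ∫ s in Ioo a b, u' s = u b - u a)
    (hftcv : ∀ a b : ℝ, 0 ≤ a → a ≤ b → b ≤ τ → ∫ s in Ioo a b, v' s = v b - v a) :
    (∫ t in Ioo 0 τ, v t * ∫ s in Ioo 0 t, u' s * (t - s) ^ (-β))
      + u 0 * (∫ s in Ioo 0 τ, v s * (s - 0) ^ (-β))
      = -(∫ t in Ioo 0 τ, u t * ∫ s in Ioo t τ, v' s * (s - t) ^ (-β))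
        + v τ * (∫ s in Ioo 0 τ, u s * (τ - s) ^ (-β)) := by
  obtain ⟨hβ0, hβ1⟩ := hβ
  have hγ1 : (-1:ℝ) < -β := by linarith
  have hδγ : (-1:ℝ) < -β + 1 := by linarith
  have hδpos : (0:ℝ) < -β + 1 := by linarith
  have contInt : ∀ (h : ℝ → ℝ), Continuous h → ∀ a b : ℝ, IntegrableOn h (Ioo a b) :=
    fun h hh a b => (hh.integrableOn_Icc).mono_set Set.Ioo_subset_Icc_self
  -- L2 : backward RL integral of v in closed form
  have hL2 : ∀ s : ℝ, 0 ≤ s → s ≤ τ →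
      (∫ t in Ioo s τ, v t * (t - s) ^ (-β))
        = v τ * ((τ - s) ^ (-β + 1) / (-β + 1))
          - (-β + 1)⁻¹ * ∫ r in Ioo s τ, v' r * (r - s) ^ (-β + 1) := by
    intro s hs0 hsτ
    have hker := ker_intOn_right hγ1 s τ
    have hsplit : (∫ t in Ioo s τ, v t * (t - s) ^ (-β))
        = ∫ t in Ioo s τ, (v τ * (t - s) ^ (-β) - (v τ - v t) * (t - s) ^ (-β)) := by
      apply setIntegral_congr_fun measurableSet_Ioo
      intro t ht
      show v t * (t - s) ^ (-β) = v τ * (t - s) ^ (-β) - (v τ - v t) * (t - s) ^ (-β)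
      ring
    have hint1 : IntegrableOn (fun t => v τ * (t - s) ^ (-β)) (Ioo s τ) := hker.const_mul _
    have hint2 : IntegrableOn (fun t => (v τ - v t) * (t - s) ^ (-β)) (Ioo s τ) :=
      Integrable.bdd_mul hker ((continuous_const.sub hvm).aestronglyMeasurable)
        (Filter.Eventually.of_forall fun x => (norm_sub_le _ _).trans (add_le_add (hvb τ) (hvb x)))
    rw [hsplit, integral_sub hint1 hint2, integral_const_mul, ker_int_right hγ1 hsτ]
    congr 1
    have e1 : (∫ t in Ioo s τ, (v τ - v t) * (t - s) ^ (-β))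
        = ∫ t in Ioo s τ, (t - s) ^ (-β) * ∫ r in Ioo t τ, v' r := by
      apply setIntegral_congr_fun measurableSet_Ioo
      intro t ht
      show (v τ - v t) * (t - s) ^ (-β) = (t - s) ^ (-β) * ∫ r in Ioo t τ, v' r
      rw [hftcv t τ (hs0.trans ht.1.le) ht.2.le le_rfl]
      ring
    rw [e1, swapB2 v' (fun t => (t - s) ^ (-β)) (contInt v' hv'm s τ) hker, ← integral_const_mul]
    apply setIntegral_congr_fun measurableSet_Ioo
    intro r hr
    show (∫ t in Ioo s r, (t - s) ^ (-β)) * v' r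
        = (-β + 1)⁻¹ * (v' r * (r - s) ^ (-β + 1))
    rw [ker_int_right hγ1 hr.1.le]
    ring
  -- R2 : forward RL integral of u in closed form
  have hR2 : ∀ t : ℝ, 0 ≤ t → t ≤ τ →
      (∫ s in Ioo 0 t, u s * (t - s) ^ (-β))
        = u 0 * ((t - 0) ^ (-β + 1) / (-β + 1))
          + (-β + 1)⁻¹ * ∫ r in Ioo 0 t, u' r * (t - r) ^ (-β + 1) := by
    intro t ht0 htτ
    have hker := ker_intOn_left hγ1 0 t
    have hsplit : (∫ s in Ioo 0 t, u s * (t - s) ^ (-β))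
        = ∫ s in Ioo 0 t, (u 0 * (t - s) ^ (-β) + (u s - u 0) * (t - s) ^ (-β)) := by
      apply setIntegral_congr_fun measurableSet_Ioo
      intro s hs
      show u s * (t - s) ^ (-β) = u 0 * (t - s) ^ (-β) + (u s - u 0) * (t - s) ^ (-β)
      ring
    have hint1 : IntegrableOn (fun s => u 0 * (t - s) ^ (-β)) (Ioo 0 t) := hker.const_mul _
    have hint2 : IntegrableOn (fun s => (u s - u 0) * (t - s) ^ (-β)) (Ioo 0 t) :=
      Integrable.bdd_mul hker ((hum.sub continuous_const).aestronglyMeasurable)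
        (Filter.Eventually.of_forall fun x => (norm_sub_le _ _).trans (add_le_add (hub x) (hub 0)))
    rw [hsplit, integral_add hint1 hint2, integral_const_mul, ker_int_left hγ1 ht0]
    congr 1
    have e1 : (∫ s in Ioo 0 t, (u s - u 0) * (t - s) ^ (-β))
        = ∫ s in Ioo 0 t, (∫ r in Ioo 0 s, u' r) * (t - s) ^ (-β) := by
      apply setIntegral_congr_fun measurableSet_Ioo
      intro s hs
      show (u s - u 0) * (t - s) ^ (-β) = (∫ r in Ioo 0 s, u' r) * (t - s) ^ (-β)
      rw [hftcu 0 s le_rfl hs.1.le (hs.2.le.trans htτ)]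
    rw [e1, swapB1 u' (fun s => (t - s) ^ (-β)) (contInt u' hu'm 0 t) hker, ← integral_const_mul]
    apply setIntegral_congr_fun measurableSet_Ioo
    intro r hr
    show u' r * (∫ s in Ioo r t, (t - s) ^ (-β))
        = (-β + 1)⁻¹ * (u' r * (t - r) ^ (-β + 1))
    rw [ker_int_left hγ1 hr.2.le]
    ring
  -- main swaps
  have hLswap := pkgA_swap hγ1 hτ.le u' v hu'm.measurable hvm.measurable Cu' Cv hu'b hvb
  have hRswap := (pkgA_swap hγ1 hτ.le u v' hum.measurable hv'm.measurable Cu Cv' hub hv'b).symm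
  have hDD := pkgA_swap hδγ hτ.le u' v' hu'm.measurable hv'm.measurable Cu' Cv' hu'b hv'b
  -- closed form for the left double integral
  have hL : (∫ s in Ioo 0 τ, u' s * ∫ t in Ioo s τ, v t * (t - s) ^ (-β))
      = v τ * (-β + 1)⁻¹ * (∫ s in Ioo 0 τ, u' s * (τ - s) ^ (-β + 1))
        - (-β + 1)⁻¹ *
          ∫ s in Ioo 0 τ, u' s * ∫ r in Ioo s τ, v' r * (r - s) ^ (-β + 1) := by
    have e1 : (∫ s in Ioo 0 τ, u' s * ∫ t in Ioo s τ, v t * (t - s) ^ (-β))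
        = ∫ s in Ioo 0 τ,
            ((v τ * (-β + 1)⁻¹) * (u' s * (τ - s) ^ (-β + 1))
              - (-β + 1)⁻¹ * (u' s * ∫ r in Ioo s τ, v' r * (r - s) ^ (-β + 1))) := by
      apply setIntegral_congr_fun measurableSet_Ioo
      intro s hs
      show u' s * ∫ t in Ioo s τ, v t * (t - s) ^ (-β) = _
      rw [hL2 s hs.1.le hs.2.le]
      field_simp
    have hintA : IntegrableOn
        (fun s => (v τ * (-β + 1)⁻¹) * (u' s * (τ - s) ^ (-β + 1))) (Ioo 0 τ) := by
      apply Integrable.const_mul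
      apply contInt _ (hu'm.mul ((continuous_const.sub continuous_id).rpow_const
        fun x => Or.inr hδpos.le))
    have hintB : IntegrableOn
        (fun s => (-β + 1)⁻¹ * (u' s * ∫ r in Ioo s τ, v' r * (r - s) ^ (-β + 1)))
        (Ioo 0 τ) :=
      (pkgA_margL hδγ hτ.le u' v' hu'm.measurable hv'm.measurable Cu' Cv' hu'b hv'b).const_mul _
    rw [e1, integral_sub hintA hintB, integral_const_mul, integral_const_mul]
  -- closed form for the right double integral
  have hR : (∫ t in Ioo 0 τ, v' t * ∫ s in Ioo 0 t, u s * (t - s) ^ (-β))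
      = u 0 * (-β + 1)⁻¹ * (∫ r in Ioo 0 τ, v' r * (r - 0) ^ (-β + 1))
        + (-β + 1)⁻¹ *
          ∫ t in Ioo 0 τ, v' t * ∫ s in Ioo 0 t, u' s * (t - s) ^ (-β + 1) := by
    have e1 : (∫ t in Ioo 0 τ, v' t * ∫ s in Ioo 0 t, u s * (t - s) ^ (-β))
        = ∫ t in Ioo 0 τ,
            ((u 0 * (-β + 1)⁻¹) * (v' t * (t - 0) ^ (-β + 1))
              + (-β + 1)⁻¹ * (v' t * ∫ s in Ioo 0 t, u' s * (t - s) ^ (-β + 1))) := by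
      apply setIntegral_congr_fun measurableSet_Ioo
      intro t ht
      show v' t * ∫ s in Ioo 0 t, u s * (t - s) ^ (-β) = _
      rw [hR2 t ht.1.le ht.2.le]
      field_simp
    have hintA : IntegrableOn
        (fun t => (u 0 * (-β + 1)⁻¹) * (v' t * (t - 0) ^ (-β + 1))) (Ioo 0 τ) := by
      apply Integrable.const_mul
      apply contInt _ (hv'm.mul ((continuous_id.sub continuous_const).rpow_const
        fun x => Or.inr hδpos.le))
    have hintB : IntegrableOn
        (fun t => (-β + 1)⁻¹ * (v' t * ∫ s in Ioo 0 t, u' s * (t - s) ^ (-β + 1)))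
        (Ioo 0 τ) :=
      (pkgA_margR hδγ hτ.le u' v' hu'm.measurable hv'm.measurable Cu' Cv' hu'b hv'b).const_mul _
    rw [e1, integral_add hintA hintB, integral_const_mul, integral_const_mul]
  rw [hLswap, hL, hL2 0 le_rfl hτ.le, hRswap, hR, hR2 τ hτ.le le_rfl, hDD]
  ring


end CaputoIBP


open CaputoIBP in
/-- Integration by parts with Riemann–Liouville boundary terms:
`∫₀^τ v ∂^β_{(0,t]}u dt + u(0)(I^{1−β}_{[0,τ)}v)(0)
  = ∫₀^τ u ∂^β_{[t,τ)}v dt + v(τ)(I^{1−β}_{(0,τ]}u)(τ)`. -/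
theorem caputo_int_by_parts_RL (β τ : ℝ) (hβ : β ∈ Set.Ioo (0:ℝ) 1) (hτ : 0 < τ)
    (u v u' v' : ℝ → ℝ)
    (hu : ∀ t ∈ Set.Icc 0 τ, HasDerivAt u (u' t) t)
    (hu' : ContinuousOn u' (Set.Icc 0 τ))
    (hv : ∀ t ∈ Set.Icc 0 τ, HasDerivAt v (v' t) t)
    (hv' : ContinuousOn v' (Set.Icc 0 τ)) :
    (∫ t in Set.Ioo 0 τ,
        v t * ((1 / Real.Gamma (1 - β)) * ∫ s in Set.Ioo 0 t, u' s * (t - s) ^ (-β)))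
      + u 0 * ((1 / Real.Gamma (1 - β)) * ∫ s in Set.Ioo 0 τ, v s * (s - 0) ^ (-β))
      = (∫ t in Set.Ioo 0 τ,
          u t * (-(1 / Real.Gamma (1 - β)) * ∫ s in Set.Ioo t τ, v' s * (s - t) ^ (-β)))
        + v τ * ((1 / Real.Gamma (1 - β)) * ∫ s in Set.Ioo 0 τ, u s * (τ - s) ^ (-β)) := by
  have hucont : ContinuousOn u (Set.Icc 0 τ) :=
    fun x hx => (hu x hx).continuousAt.continuousWithinAt
  have hvcont : ContinuousOn v (Set.Icc 0 τ) :=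
    fun x hx => (hv x hx).continuousAt.continuousWithinAt
  set c : ℝ := 1 / Real.Gamma (1 - β) with hc
  -- global continuous bounded extensions
  set U : ℝ → ℝ := Set.IccExtend hτ.le ((Set.Icc 0 τ).restrict u) with hU
  set V : ℝ → ℝ := Set.IccExtend hτ.le ((Set.Icc 0 τ).restrict v) with hV
  set U' : ℝ → ℝ := Set.IccExtend hτ.le ((Set.Icc 0 τ).restrict u') with hU'
  set V' : ℝ → ℝ := Set.IccExtend hτ.le ((Set.Icc 0 τ).restrict v') with hV'
  have hUc : Continuous U :=
    Continuous.Icc_extend' (continuousOn_iff_continuous_restrict.mp hucont)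
  have hVc : Continuous V :=
    Continuous.Icc_extend' (continuousOn_iff_continuous_restrict.mp hvcont)
  have hU'c : Continuous U' :=
    Continuous.Icc_extend' (continuousOn_iff_continuous_restrict.mp hu')
  have hV'c : Continuous V' :=
    Continuous.Icc_extend' (continuousOn_iff_continuous_restrict.mp hv')
  have hUeq : ∀ x ∈ Set.Icc 0 τ, U x = u x := fun x hx => by
    rw [hU, Set.IccExtend_of_mem _ _ hx]; rfl
  have hVeq : ∀ x ∈ Set.Icc 0 τ, V x = v x := fun x hx => by
    rw [hV, Set.IccExtend_of_mem _ _ hx]; rfl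
  have hU'eq : ∀ x ∈ Set.Icc 0 τ, U' x = u' x := fun x hx => by
    rw [hU', Set.IccExtend_of_mem _ _ hx]; rfl
  have hV'eq : ∀ x ∈ Set.Icc 0 τ, V' x = v' x := fun x hx => by
    rw [hV', Set.IccExtend_of_mem _ _ hx]; rfl
  obtain ⟨CU, hCU⟩ := isCompact_Icc.exists_bound_of_continuousOn hucont
  obtain ⟨CV, hCV⟩ := isCompact_Icc.exists_bound_of_continuousOn hvcont
  obtain ⟨CU', hCU'⟩ := isCompact_Icc.exists_bound_of_continuousOn hu'
  obtain ⟨CV', hCV'⟩ := isCompact_Icc.exists_bound_of_continuousOn hv'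
  have hUb : ∀ x, ‖U x‖ ≤ CU := fun x => by
    rw [hU, Set.IccExtend_apply]; exact hCU _ (Set.projIcc 0 τ hτ.le x).2
  have hVb : ∀ x, ‖V x‖ ≤ CV := fun x => by
    rw [hV, Set.IccExtend_apply]; exact hCV _ (Set.projIcc 0 τ hτ.le x).2
  have hU'b : ∀ x, ‖U' x‖ ≤ CU' := fun x => by
    rw [hU', Set.IccExtend_apply]; exact hCU' _ (Set.projIcc 0 τ hτ.le x).2
  have hV'b : ∀ x, ‖V' x‖ ≤ CV' := fun x => by
    rw [hV', Set.IccExtend_apply]; exact hCV' _ (Set.projIcc 0 τ hτ.le x).2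
  have hsub : ∀ a b : ℝ, 0 ≤ a → b ≤ τ → Set.Ioo a b ⊆ Set.Icc 0 τ := by
    intro a b ha hb x hx
    exact ⟨ha.trans hx.1.le, hx.2.le.trans hb⟩
  have hftcU : ∀ a b : ℝ, 0 ≤ a → a ≤ b → b ≤ τ → ∫ s in Ioo a b, U' s = U b - U a := by
    intro a b ha hab hb
    have e1 : ∫ s in Ioo a b, U' s = ∫ s in Ioo a b, u' s :=
      setIntegral_congr_fun measurableSet_Ioo (fun s hs => hU'eq s (hsub a b ha hb hs))
    rw [e1, ftc a b τ ha hab hb u u' hu hu', hUeq b ⟨ha.trans hab, hb⟩,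
      hUeq a ⟨ha, hab.trans hb⟩]
  have hftcV : ∀ a b : ℝ, 0 ≤ a → a ≤ b → b ≤ τ → ∫ s in Ioo a b, V' s = V b - V a := by
    intro a b ha hab hb
    have e1 : ∫ s in Ioo a b, V' s = ∫ s in Ioo a b, v' s :=
      setIntegral_congr_fun measurableSet_Ioo (fun s hs => hV'eq s (hsub a b ha hb hs))
    rw [e1, ftc a b τ ha hab hb v v' hv hv', hVeq b ⟨ha.trans hab, hb⟩,
      hVeq a ⟨ha, hab.trans hb⟩]
  have haux := aux β τ hβ hτ U V U' V' hUc hVc hU'c hV'c CU CV CU' CV'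
    hUb hVb hU'b hV'b hftcU hftcV
  rw [hUeq 0 ⟨le_rfl, hτ.le⟩, hVeq τ ⟨hτ.le, le_rfl⟩] at haux
  -- rewrite each of the four integrals in the goal
  have e1 : (∫ t in Set.Ioo 0 τ, v t * (c * ∫ s in Set.Ioo 0 t, u' s * (t - s) ^ (-β)))
      = c * ∫ t in Set.Ioo 0 τ, V t * ∫ s in Set.Ioo 0 t, U' s * (t - s) ^ (-β) := by
    rw [← integral_const_mul]
    apply setIntegral_congr_fun measurableSet_Ioo
    intro t ht
    beta_reduce
    have e0 : (∫ s in Set.Ioo 0 t, u' s * (t - s) ^ (-β))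
        = ∫ s in Set.Ioo 0 t, U' s * (t - s) ^ (-β) := by
      apply setIntegral_congr_fun measurableSet_Ioo
      intro s hs
      beta_reduce
      rw [hU'eq s (hsub 0 t le_rfl ht.2.le hs)]
    rw [e0, hVeq t ⟨ht.1.le, ht.2.le⟩]
    ring
  have e2 : (∫ s in Set.Ioo 0 τ, v s * (s - 0) ^ (-β))
      = ∫ s in Set.Ioo 0 τ, V s * (s - 0) ^ (-β) := by
    apply setIntegral_congr_fun measurableSet_Ioo
    intro s hs
    beta_reduce
    rw [hVeq s ⟨hs.1.le, hs.2.le⟩]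
  have e3 : (∫ t in Set.Ioo 0 τ, u t * (-c * ∫ s in Set.Ioo t τ, v' s * (s - t) ^ (-β)))
      = -c * ∫ t in Set.Ioo 0 τ, U t * ∫ s in Set.Ioo t τ, V' s * (s - t) ^ (-β) := by
    rw [← integral_const_mul]
    apply setIntegral_congr_fun measurableSet_Ioo
    intro t ht
    beta_reduce
    have e0 : (∫ s in Set.Ioo t τ, v' s * (s - t) ^ (-β))
        = ∫ s in Set.Ioo t τ, V' s * (s - t) ^ (-β) := by
      apply setIntegral_congr_fun measurableSet_Ioo
      intro s hs
      beta_reduce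
      rw [hV'eq s (hsub t τ ht.1.le le_rfl hs)]
    rw [e0, hUeq t ⟨ht.1.le, ht.2.le⟩]
    ring
  have e4 : (∫ s in Set.Ioo 0 τ, u s * (τ - s) ^ (-β))
      = ∫ s in Set.Ioo 0 τ, U s * (τ - s) ^ (-β) := by
    apply setIntegral_congr_fun measurableSet_Ioo
    intro s hs
    beta_reduce
    rw [hUeq s ⟨hs.1.le, hs.2.le⟩]
  rw [e1, e2, e3, e4]
  linear_combination c * haux
end

section
/- Let β ∈ (0,1) and ρ ∈ C¹([0,τ]). Then for every t ∈ [0,τ), the backward Caputo derivative satisfies the convexity inequality (1/2) ∂^β_{[t,τ)} (ρ²)(t) ≤ ρ(t) · ∂^β_{[t,τ)} ρ(t), where ∂^β_{[t,τ)} v(t) = −(1/Γ(1−β)) ∫ₜ^τ v'(s)(s−t)^{−β} ds. -/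
open Set MeasureTheory Real

private lemma rpow_int {t τ β : ℝ} (hβ : β < 1) :
    IntegrableOn (fun s => (s - t) ^ (-β)) (Set.Ioo t τ) := by
  have h : IntervalIntegrable (fun s => (s - t) ^ (-β)) volume t τ := by
    have := (intervalIntegral.intervalIntegrable_rpow' (a := 0) (b := τ - t)
      (r := -β) (by linarith)).comp_sub_right t
    simpa using this
  exact h.1.mono_set Ioo_subset_Ioc_self

private lemma mul_rpow_int {t τ β : ℝ} (ht : 0 ≤ t) (hβ : β < 1)
    {φ : ℝ → ℝ} (hφ : ContinuousOn φ (Set.Icc 0 τ)) :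
    IntegrableOn (fun s => φ s * (s - t) ^ (-β)) (Set.Ioo t τ) := by
  have hsub : Set.Ioo t τ ⊆ Set.Icc 0 τ := fun x hx => ⟨le_trans ht hx.1.le, hx.2.le⟩
  obtain ⟨C, hC⟩ := isCompact_Icc.exists_bound_of_continuousOn hφ
  refine (rpow_int hβ).bdd_mul (c := C) ((hφ.mono hsub).aestronglyMeasurable measurableSet_Ioo) ?_
  exact (ae_restrict_iff' measurableSet_Ioo).2 (ae_of_all _ fun x hx => hC x (hsub hx))

set_option maxHeartbeats 1000000 in
private lemma key_nonneg {t τ β : ℝ} (ht : 0 ≤ t) (htτ : t < τ) (hβ0 : 0 < β) (hβ1 : β < 1)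
    {ρ ρ' : ℝ → ℝ} (hρ : ∀ s ∈ Set.Icc 0 τ, HasDerivAt ρ (ρ' s) s)
    (hρ' : ContinuousOn ρ' (Set.Icc 0 τ)) :
    0 ≤ ∫ s in Set.Ioo t τ, (ρ s - ρ t) * ρ' s * (s - t) ^ (-β) := by
  have hρc : ContinuousOn ρ (Set.Icc 0 τ) :=
    fun x hx => (hρ x hx).continuousAt.continuousWithinAt
  obtain ⟨M, hM⟩ := isCompact_Icc.exists_bound_of_continuousOn hρ'
  have hτ0 : (0:ℝ) ≤ τ := le_trans ht htτ.le
  have hM0 : 0 ≤ M := le_trans (norm_nonneg _) (hM 0 ⟨le_refl _, hτ0⟩)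
  have htmem : t ∈ Set.Icc (0:ℝ) τ := ⟨ht, htτ.le⟩
  -- Lipschitz bound
  have hlip : ∀ s ∈ Set.Icc 0 τ, |ρ s - ρ t| ≤ M * |s - t| := by
    intro s hs
    have := (convex_Icc (0:ℝ) τ).norm_image_sub_le_of_norm_hasDerivWithin_le
      (fun x hx => (hρ x hx).hasDerivWithinAt) hM hs htmem
    simpa [Real.norm_eq_abs, abs_sub_comm] using this
  set w : ℝ → ℝ := fun s => (ρ s - ρ t) ^ 2 / 2 with hw
  set g : ℝ → ℝ := fun s => (s - t) ^ (-β) with hg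
  set f : ℝ → ℝ := fun s => (ρ s - ρ t) * ρ' s * (s - t) ^ (-β) with hf
  set ε : ℕ → ℝ := fun n => (τ - t) / (n + 1) with hε
  have hεpos : ∀ n, 0 < ε n := fun n => by
    apply div_pos (by linarith) (by positivity)
  have hεle : ∀ n, ε n ≤ τ - t := fun n => by
    rw [hε]
    apply div_le_self (by linarith) (by push_cast; linarith [Nat.cast_nonneg (α := ℝ) n])
  -- Step 1: lower bound for each truncated integral
  have step1 : ∀ n : ℕ, -(M ^ 2 / 2 * ε n ^ ((2:ℝ) - β))
      ≤ ∫ s in Set.Ioo (t + ε n) τ, f s := by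
    intro n
    set a := t + ε n with ha
    have hta : t < a := by have := hεpos n; simp [ha]; linarith
    have haτ : a ≤ τ := by have := hεle n; simp [ha]; linarith
    have ha0 : 0 ≤ a := le_trans ht hta.le
    have hIccsub : Set.Icc a τ ⊆ Set.Icc 0 τ := Set.Icc_subset_Icc ha0 le_rfl
    have huIcc : Set.uIcc a τ = Set.Icc a τ := Set.uIcc_of_le haτ
    -- integration by parts on [a, τ]
    have hwd : ∀ x ∈ Set.Icc a τ, HasDerivAt w ((ρ x - ρ t) * ρ' x) x := by
      intro x hx
      have h1 := ((hρ x (hIccsub hx)).sub_const (ρ t)).pow 2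
      have := h1.div_const 2
      exact this.congr_deriv (by rw [show (2:ℕ) - 1 = 1 from rfl]; push_cast; ring)
    have hgd : ∀ x ∈ Set.Icc a τ, HasDerivAt g (-β * (x - t) ^ (-β - 1)) x := by
      intro x hx
      have hxt : x - t ≠ 0 := by have := hx.1; intro h; nlinarith [hεpos n]
      have h1 : HasDerivAt (fun y : ℝ => y - t) 1 x := (hasDerivAt_id x).sub_const t
      have h2 := (Real.hasDerivAt_rpow_const (p := -β) (Or.inl hxt)).comp x h1
      exact h2.congr_deriv (by ring)
    have hwc : ContinuousOn w (Set.Icc a τ) :=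
      fun x hx => (hwd x hx).continuousAt.continuousWithinAt
    have hgc : ContinuousOn g (Set.Icc a τ) :=
      fun x hx => (hgd x hx).continuousAt.continuousWithinAt
    have hw'c : ContinuousOn (fun x => (ρ x - ρ t) * ρ' x) (Set.Icc a τ) :=
      (((hρc.mono hIccsub).sub continuousOn_const).mul (hρ'.mono hIccsub))
    have hg'c : ContinuousOn (fun x => -β * (x - t) ^ (-β - 1)) (Set.Icc a τ) := by
      apply continuousOn_const.mul
      apply ContinuousOn.rpow_const ((continuousOn_id.sub continuousOn_const))
      intro x hx
      left
      have := hx.1; have := hεpos n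
      intro h; simp only [Pi.sub_apply, id_eq] at h; nlinarith
    have hibp := intervalIntegral.integral_deriv_mul_eq_sub_of_hasDerivAt
      (u := w) (v := g) (u' := fun x => (ρ x - ρ t) * ρ' x)
      (v' := fun x => -β * (x - t) ^ (-β - 1)) (a := a) (b := τ)
      (by rw [huIcc]; exact hwc) (by rw [huIcc]; exact hgc)
      (by rw [min_eq_left haτ, max_eq_right haτ]
          exact fun x hx => hwd x (Set.Ioo_subset_Icc_self hx))
      (by rw [min_eq_left haτ, max_eq_right haτ]
          exact fun x hx => hgd x (Set.Ioo_subset_Icc_self hx))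
      (by rw [intervalIntegrable_iff_integrableOn_Icc_of_le haτ]
          exact hw'c.integrableOn_compact isCompact_Icc)
      (by rw [intervalIntegrable_iff_integrableOn_Icc_of_le haτ]
          exact hg'c.integrableOn_compact isCompact_Icc)
    -- split the IBP identity
    have hsplit : (∫ x in a..τ, f x) + ∫ x in a..τ, w x * (-β * (x - t) ^ (-β - 1))
        = w τ * g τ - w a * g a := by
      rw [← intervalIntegral.integral_add]
      · exact hibp
      · rw [intervalIntegrable_iff_integrableOn_Icc_of_le haτ]
        exact ((hw'c.mul hgc).congr (fun x hx => rfl)).integrableOn_compact isCompact_Icc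
      · rw [intervalIntegrable_iff_integrableOn_Icc_of_le haτ]
        exact (hwc.mul hg'c).integrableOn_compact isCompact_Icc
    have hnonpos : ∫ x in a..τ, w x * (-β * (x - t) ^ (-β - 1)) ≤ 0 := by
      have h0 : 0 ≤ ∫ x in a..τ, -(w x * (-β * (x - t) ^ (-β - 1))) := by
        apply intervalIntegral.integral_nonneg haτ
        intro u hu
        have h1 : 0 ≤ w u := by rw [hw]; positivity
        have h2 : 0 ≤ (u - t) ^ (-β - 1) := by
          apply Real.rpow_nonneg; nlinarith [hu.1, hεpos n]
        nlinarith [mul_nonneg hβ0.le (mul_nonneg h1 h2)]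
      rw [intervalIntegral.integral_neg] at h0; linarith
    have hwτ : 0 ≤ w τ * g τ := by
      apply mul_nonneg (by rw [hw]; positivity)
      rw [hg]; apply Real.rpow_nonneg; nlinarith
    have hwa : w a * g a ≤ M ^ 2 / 2 * ε n ^ ((2:ℝ) - β) := by
      have hl := hlip a (hIccsub ⟨le_rfl, haτ⟩)
      have hat : a - t = ε n := by rw [ha]; ring
      have hεn := hεpos n
      have h2 : w a ≤ M ^ 2 * ε n ^ 2 / 2 := by
        rw [hw]
        have : |ρ a - ρ t| ≤ M * ε n := by rwa [hat, abs_of_pos hεn] at hl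
        nlinarith [abs_nonneg (ρ a - ρ t), sq_abs (ρ a - ρ t)]
      have h3 : g a = ε n ^ (-β) := by simp only [hg]; rw [hat]
      have h4 : ε n ^ ((2:ℝ) - β) = ε n ^ 2 * ε n ^ (-β) := by
        rw [show (2:ℝ) - β = 2 + (-β) by ring, Real.rpow_add hεn, Real.rpow_two]
      have h5 : 0 ≤ ε n ^ (-β) := Real.rpow_nonneg hεn.le _
      rw [h3, h4]
      nlinarith [mul_le_mul_of_nonneg_right h2 h5]
    have hIoo : ∫ s in Set.Ioo a τ, f s = ∫ x in a..τ, f x := by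
      rw [intervalIntegral.integral_of_le haτ, MeasureTheory.integral_Ioc_eq_integral_Ioo]
    rw [hIoo]
    linarith
  -- Step 2: pass to the limit
  have hfint : IntegrableOn f (Set.Ioo t τ) := by
    rw [hf]
    exact mul_rpow_int ht hβ1 (((hρc.sub continuousOn_const).mul hρ'))
  have hmono : Monotone (fun n : ℕ => Set.Ioo (t + ε n) τ) := by
    intro n m hnm
    apply Set.Ioo_subset_Ioo _ le_rfl
    have hεm : ε m ≤ ε n := by
      rw [hε]
      apply div_le_div_of_nonneg_left (by linarith) (by positivity)
      push_cast
      exact add_le_add_left (Nat.cast_le.2 hnm) 1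
    linarith
  have hunion : (⋃ n, Set.Ioo (t + ε n) τ) = Set.Ioo t τ := by
    ext x
    simp only [Set.mem_iUnion, Set.mem_Ioo]
    constructor
    · rintro ⟨n, h1, h2⟩
      exact ⟨by linarith [hεpos n], h2⟩
    · rintro ⟨h1, h2⟩
      obtain ⟨n, hn⟩ := exists_nat_gt ((τ - t) / (x - t))
      refine ⟨n, ?_, h2⟩
      have hxt : (0:ℝ) < x - t := by linarith
      have hcast : ((τ - t) / (x - t)) < (n:ℝ) + 1 := by linarith
      have h3 : τ - t < ((n:ℝ) + 1) * (x - t) := by rwa [div_lt_iff₀ hxt] at hcast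
      have h4 : ε n < x - t := by
        rw [hε]
        rw [div_lt_iff₀ (by positivity)]
        nlinarith
      linarith
  have hlim : Filter.Tendsto (fun n => ∫ s in Set.Ioo (t + ε n) τ, f s) Filter.atTop
      (nhds (∫ s in Set.Ioo t τ, f s)) := by
    have := MeasureTheory.tendsto_setIntegral_of_monotone
      (fun n : ℕ => measurableSet_Ioo) hmono (hunion ▸ hfint)
    rwa [hunion] at this
  have hdivtop : Filter.Tendsto (fun n : ℕ => (n:ℝ) + 1) Filter.atTop Filter.atTop :=
    Filter.tendsto_atTop_add_const_right Filter.atTop 1 tendsto_natCast_atTop_atTop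
  have hε0 : Filter.Tendsto ε Filter.atTop (nhds 0) := by
    rw [hε]
    exact Filter.Tendsto.div_atTop tendsto_const_nhds hdivtop
  have hc2 : ContinuousAt (fun x : ℝ => x ^ ((2:ℝ) - β)) 0 :=
    Real.continuousAt_rpow_const 0 _ (Or.inr (by linarith))
  have hb0 : Filter.Tendsto (fun n => ε n ^ ((2:ℝ) - β)) Filter.atTop (nhds 0) := by
    have h := hc2.tendsto.comp hε0
    rwa [Function.comp_def, Real.zero_rpow (by linarith : (2:ℝ) - β ≠ 0)] at h
  have hb : Filter.Tendsto (fun n => -(M ^ 2 / 2 * ε n ^ ((2:ℝ) - β))) Filter.atTop (nhds 0) := by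
    have := (hb0.const_mul (M ^ 2 / 2)).neg
    simpa using this
  exact le_of_tendsto_of_tendsto' hb hlim step1

/-- Convexity inequality for the backward Caputo derivative:
`(1/2) ∂^β_{[t,τ)}(ρ²)(t) ≤ ρ(t) ∂^β_{[t,τ)}ρ(t)` for `t ∈ [0,τ)`. -/
theorem backward_caputo_sq_le (β τ : ℝ) (hβ : β ∈ Set.Ioo (0:ℝ) 1) (hτ : 0 < τ)
    (ρ ρ' : ℝ → ℝ)
    (hρ : ∀ t ∈ Set.Icc 0 τ, HasDerivAt ρ (ρ' t) t)
    (hρ' : ContinuousOn ρ' (Set.Icc 0 τ)) :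
    ∀ t ∈ Set.Ico 0 τ,
      (1 / 2) * (-(1 / Real.Gamma (1 - β)) *
          ∫ s in Set.Ioo t τ, deriv (fun r => ρ r ^ 2) s * (s - t) ^ (-β))
        ≤ ρ t * (-(1 / Real.Gamma (1 - β)) *
            ∫ s in Set.Ioo t τ, ρ' s * (s - t) ^ (-β)) := by
  obtain ⟨hβ0, hβ1⟩ := hβ
  intro t ht
  obtain ⟨ht0, htτ⟩ := ht
  have hρc : ContinuousOn ρ (Set.Icc 0 τ) :=
    fun x hx => (hρ x hx).continuousAt.continuousWithinAt
  have hc : 0 < 1 / Real.Gamma (1 - β) := by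
    have := Real.Gamma_pos_of_pos (by linarith : (0:ℝ) < 1 - β)
    positivity
  -- rewrite the squared-derivative integrand
  have hA : (∫ s in Set.Ioo t τ, deriv (fun r => ρ r ^ 2) s * (s - t) ^ (-β))
      = ∫ s in Set.Ioo t τ, (2 * (ρ s * ρ' s)) * (s - t) ^ (-β) := by
    apply setIntegral_congr_fun measurableSet_Ioo
    intro s hs
    have hs' : s ∈ Set.Icc 0 τ := ⟨le_trans ht0 hs.1.le, hs.2.le⟩
    have hd := (hρ s hs').pow 2
    show deriv (fun r => ρ r ^ 2) s * (s - t) ^ (-β) = 2 * (ρ s * ρ' s) * (s - t) ^ (-β)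
    rw [show (fun r => ρ r ^ 2) = ρ ^ 2 from rfl, hd.deriv]
    push_cast
    ring
  -- integrability
  have hint1 : IntegrableOn (fun s => ρ' s * (s - t) ^ (-β)) (Set.Ioo t τ) :=
    mul_rpow_int ht0 hβ1 hρ'
  have hint2 : IntegrableOn (fun s => ρ s * ρ' s * (s - t) ^ (-β)) (Set.Ioo t τ) :=
    mul_rpow_int ht0 hβ1 (hρc.mul hρ')
  -- linearity manipulations
  have hA2 : (∫ s in Set.Ioo t τ, (2 * (ρ s * ρ' s)) * (s - t) ^ (-β))
      = 2 * ∫ s in Set.Ioo t τ, ρ s * ρ' s * (s - t) ^ (-β) := by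
    rw [← MeasureTheory.integral_const_mul]
    apply setIntegral_congr_fun measurableSet_Ioo
    intro s hs
    ring
  have hB : ρ t * (∫ s in Set.Ioo t τ, ρ' s * (s - t) ^ (-β))
      = ∫ s in Set.Ioo t τ, ρ t * ρ' s * (s - t) ^ (-β) := by
    rw [← MeasureTheory.integral_const_mul]
    apply setIntegral_congr_fun measurableSet_Ioo
    intro s hs
    ring
  have hint3 : IntegrableOn (fun s => ρ t * ρ' s * (s - t) ^ (-β)) (Set.Ioo t τ) :=
    mul_rpow_int ht0 hβ1 (continuousOn_const.mul hρ')
  have hsub : (∫ s in Set.Ioo t τ, ρ s * ρ' s * (s - t) ^ (-β))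
      - (∫ s in Set.Ioo t τ, ρ t * ρ' s * (s - t) ^ (-β))
      = ∫ s in Set.Ioo t τ, (ρ s - ρ t) * ρ' s * (s - t) ^ (-β) := by
    rw [← integral_sub hint2 hint3]
    apply setIntegral_congr_fun measurableSet_Ioo
    intro s hs
    ring
  have hkey := key_nonneg ht0 htτ hβ0 hβ1 hρ hρ'
  rw [hA, hA2]
  have hle : (∫ s in Set.Ioo t τ, ρ t * ρ' s * (s - t) ^ (-β))
      ≤ ∫ s in Set.Ioo t τ, ρ s * ρ' s * (s - t) ^ (-β) := by linarith
  have h2 : ρ t * (∫ s in Set.Ioo t τ, ρ' s * (s - t) ^ (-β))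
      ≤ ∫ s in Set.Ioo t τ, ρ s * ρ' s * (s - t) ^ (-β) := by rw [hB]; exact hle
  nlinarith [mul_le_mul_of_nonneg_left h2 hc.le]
end

section
/- Let β ∈ (0,1) and u ∈ C¹([0,τ]). Then for every convex differentiable function Φ : ℝ → ℝ and t ∈ (0,τ], one has ∂^β_{(0,t]} (Φ ∘ u)(t) ≤ Φ'(u(t)) · ∂^β_{(0,t]} u(t), where ∂^β_{(0,t]} denotes the forward Caputo derivative of order β. -/
open Set MeasureTheory Real Filter

/-- Gradient inequality for a convex differentiable function. -/
private lemma caputo_grad_ineq (Φ Φ' : ℝ → ℝ) (hΦconv : ConvexOn ℝ Set.univ Φ)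
    (hΦ : ∀ x, HasDerivAt Φ (Φ' x) x) (a b : ℝ) :
    Φ' b * (a - b) ≤ Φ a - Φ b := by
  rcases lt_trichotomy a b with h | h | h
  · have hs := hΦconv.slope_le_of_hasDerivAt (Set.mem_univ a) (Set.mem_univ b) h (hΦ b)
    rw [slope_def_field] at hs
    have h1 : (Φ b - Φ a) ≤ Φ' b * (b - a) := (div_le_iff₀ (by linarith)).mp hs
    nlinarith
  · simp [h]
  · have hs := hΦconv.le_slope_of_hasDerivAt (Set.mem_univ b) (Set.mem_univ a) h (hΦ b)
    rw [slope_def_field] at hs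
    have h1 : Φ' b * (a - b) ≤ Φ a - Φ b := by
      have := (le_div_iff₀ (by linarith : (0:ℝ) < a - b)).mp hs
      linarith
    exact h1

/-- Integrability and value of the singular kernel integral. -/
private lemma caputo_kernel_int {β t a : ℝ} (hβ0 : 0 < β) (hβ1 : β < 1) (hat : a < t) :
    IntervalIntegrable (fun s => (t - s) ^ (-β)) volume a t ∧
      (∫ s in a..t, (t - s) ^ (-β)) = (t - a) ^ (1 - β) / (1 - β) := by
  have hβ' : (-1:ℝ) < -β := by linarith
  have h1 : IntervalIntegrable (fun x : ℝ => x ^ (-β)) volume 0 (t - a) :=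
    intervalIntegral.intervalIntegrable_rpow' hβ'
  have h2 := h1.comp_sub_left t
  constructor
  · have h3 : IntervalIntegrable (fun x => (t - x) ^ (-β)) volume (t - 0) (t - (t - a)) := h2
    simpa using h3.symm
  · rw [intervalIntegral.integral_comp_sub_left (fun x => x ^ (-β)) t]
    simp only [sub_self, sub_sub_cancel]
    rw [integral_rpow (Or.inl hβ')]
    rw [Real.zero_rpow (by intro hcon; linarith : -β + 1 ≠ 0)]
    rw [show -β + 1 = 1 - β by ring]
    ring

/-- Integrability of a continuous function times the singular kernel. -/
private lemma caputo_mul_int {β t : ℝ} (hβ0 : 0 < β) (hβ1 : β < 1)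
    (f : ℝ → ℝ) (hf : ContinuousOn f (Set.Icc 0 t)) {a b : ℝ}
    (h0a : 0 ≤ a) (hab : a ≤ b) (hbt : b ≤ t) :
    IntervalIntegrable (fun s => f s * (t - s) ^ (-β)) volume a b := by
  rw [intervalIntegrable_iff_integrableOn_Ioc_of_le hab]
  obtain ⟨C0, hC0⟩ := isCompact_Icc.exists_bound_of_continuousOn hf
  have hwmeas : Measurable fun s : ℝ => (t - s) ^ (-β) := by fun_prop
  have hsub : Set.Ioc a b ⊆ Set.Icc 0 t := fun s hs => ⟨h0a.trans hs.1.le, hs.2.trans hbt⟩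
  have hwi : IntegrableOn (fun s : ℝ => (t - s) ^ (-β)) (Set.Ioc a b) volume := by
    rcases lt_or_ge a t with hat | hat
    · exact ((intervalIntegrable_iff_integrableOn_Ioc_of_le hat.le).mp
        (caputo_kernel_int hβ0 hβ1 hat).1).mono_set (Set.Ioc_subset_Ioc le_rfl hbt)
    · rw [Set.Ioc_eq_empty (not_lt.mpr (hbt.trans hat))]
      exact integrableOn_empty
  have hfae : AEStronglyMeasurable (fun s => f s * (t - s) ^ (-β))
      (volume.restrict (Set.Ioc a b)) :=
    ((hf.mono hsub).aestronglyMeasurable measurableSet_Ioc).mul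
      hwmeas.aestronglyMeasurable.restrict
  refine Integrable.mono' (hwi.const_mul C0) hfae ?_
  filter_upwards [ae_restrict_mem measurableSet_Ioc] with s hs
  have hs' := hsub hs
  have hw0 : (0:ℝ) ≤ (t - s) ^ (-β) := Real.rpow_nonneg (by linarith [hs'.2]) _
  have hfb := hC0 s hs'
  rw [Real.norm_eq_abs] at hfb
  rw [Real.norm_eq_abs, abs_mul, abs_of_nonneg hw0]
  exact mul_le_mul_of_nonneg_right hfb hw0

/-- Key positivity: if `g` is `C¹` on `[0,t]` with `g s ≤ g t` on `[0,t]`, then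
`∫₀ᵗ g'(s) (t-s)^{-β} ds ≥ 0`. -/
private lemma caputo_key {β t : ℝ} (hβ0 : 0 < β) (hβ1 : β < 1) (ht0 : 0 < t)
    (g g' : ℝ → ℝ) (hgderiv : ∀ s ∈ Set.Icc 0 t, HasDerivAt g (g' s) s)
    (hg'cont : ContinuousOn g' (Set.Icc 0 t))
    (hgle : ∀ s ∈ Set.Icc 0 t, g s ≤ g t) :
    0 ≤ ∫ s in Set.Ioo 0 t, g' s * (t - s) ^ (-β) := by
  obtain ⟨M0, hM0⟩ := isCompact_Icc.exists_bound_of_continuousOn hg'cont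
  set M : ℝ := max M0 0 with hMdef
  have hM0' : (0:ℝ) ≤ M := le_max_right _ _
  have hMb : ∀ s ∈ Set.Icc (0:ℝ) t, |g' s| ≤ M := by
    intro s hs
    have := hM0 s hs
    rw [Real.norm_eq_abs] at this
    exact this.trans (le_max_left _ _)
  set w : ℝ → ℝ := fun s => (t - s) ^ (-β) with hwdef
  set G : ℝ → ℝ := fun s => g' s * w s with hGdef
  have hGint : ∀ a b, 0 ≤ a → a ≤ b → b ≤ t → IntervalIntegrable G volume a b :=
    fun a b h1 h2 h3 => caputo_mul_int hβ0 hβ1 g' hg'cont h1 h2 h3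
  have hGcont : ∀ x ∈ Set.Ioo (0:ℝ) t, ContinuousAt G x := by
    intro x hx
    have h1 : ContinuousAt g' x := hg'cont.continuousAt (Icc_mem_nhds hx.1 hx.2)
    have h2 : ContinuousAt w x := by
      have hbase : ContinuousAt (fun y : ℝ => y ^ (-β)) (t - x) :=
        Real.continuousAt_rpow_const _ _ (Or.inl (sub_ne_zero.mpr (ne_of_gt hx.2)))
      exact hbase.comp ((continuous_sub_left t).continuousAt)
    exact h1.mul h2
  set F : ℝ → ℝ := fun r => ∫ s in r..t, G s with hFdef
  set K : ℝ → ℝ := fun r => (t - r) ^ (-β) * (g t - g r) with hKdef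
  have hHderiv : ∀ x ∈ Set.Ioo (0:ℝ) t,
      HasDerivAt (fun r => F r - K r) (-(β * (t - x) ^ (-β - 1) * (g t - g x))) x := by
    intro x hx
    have hxt : (0:ℝ) < t - x := by linarith [hx.2]
    have hFd : HasDerivAt F (-G x) x :=
      intervalIntegral.integral_hasDerivAt_left (hGint x t hx.1.le hx.2.le le_rfl)
        (ContinuousAt.stronglyMeasurableAtFilter isOpen_Ioo hGcont x hx)
        (hGcont x hx)
    have h1 : HasDerivAt (fun r : ℝ => t - r) (-1) x := (hasDerivAt_id x).const_sub t
    have h2 : HasDerivAt (fun r : ℝ => (t - r) ^ (-β)) (β * (t - x) ^ (-β - 1)) x := by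
      have h2' := (Real.hasDerivAt_rpow_const (x := t - x) (p := -β)
        (Or.inl hxt.ne')).comp x h1
      refine h2'.congr_deriv ?_
      ring
    have hgd : HasDerivAt (fun r => g t - g r) (-g' x) x :=
      (hgderiv x ⟨hx.1.le, hx.2.le⟩).const_sub (g t)
    have hKd : HasDerivAt K
        (β * (t - x) ^ (-β - 1) * (g t - g x) + (t - x) ^ (-β) * -g' x) x := h2.mul hgd
    have hfk := hFd.sub hKd
    refine hfk.congr_deriv ?_
    simp only [hGdef, hwdef]
    ring
  -- bound on F near t
  have hFb : ∀ x ∈ Set.Ioo (0:ℝ) t, |F x| ≤ M * ((t - x) ^ (1 - β) / (1 - β)) := by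
    intro x hx
    have hbound : IntervalIntegrable (fun s => M * w s) volume x t :=
      ((caputo_kernel_int hβ0 hβ1 hx.2).1).const_mul M
    have hae : ∀ᵐ s ∂volume.restrict (Set.uIoc x t), ‖G s‖ ≤ M * w s := by
      filter_upwards [ae_restrict_mem measurableSet_uIoc] with s hs
      rw [Set.uIoc_of_le hx.2.le] at hs
      have hw0 : 0 ≤ w s := Real.rpow_nonneg (by linarith [hs.2]) _
      have hMs := hMb s ⟨(hx.1.le.trans hs.1.le), hs.2⟩
      rw [Real.norm_eq_abs]
      simp only [hGdef]
      rw [abs_mul, abs_of_nonneg hw0]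
      exact mul_le_mul_of_nonneg_right hMs hw0
    have h := intervalIntegral.norm_integral_le_abs_of_norm_le hae hbound
    rw [intervalIntegral.integral_const_mul, (caputo_kernel_int hβ0 hβ1 hx.2).2] at h
    rw [Real.norm_eq_abs] at h
    refine h.trans (le_of_eq (abs_of_nonneg ?_))
    have h1 : (0:ℝ) ≤ (t - x) ^ (1 - β) := Real.rpow_nonneg (by linarith [hx.2]) _
    have h2 : (0:ℝ) < 1 - β := by linarith
    positivity
  -- bound on K near t
  have hKb : ∀ x ∈ Set.Ioo (0:ℝ) t, |K x| ≤ M * (t - x) ^ (1 - β) := by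
    intro x hx
    have hxt : (0:ℝ) < t - x := by linarith [hx.2]
    have hseg : ‖g t - g x‖ ≤ M * (t - x) :=
      norm_image_sub_le_of_norm_deriv_le_segment'
        (f := g) (f' := g') (a := x) (b := t) (C := M)
        (fun s hs => (hgderiv s ⟨hx.1.le.trans hs.1, hs.2⟩).hasDerivWithinAt)
        (fun s hs => by
          rw [Real.norm_eq_abs]; exact hMb s ⟨hx.1.le.trans hs.1, hs.2.le⟩)
        t (right_mem_Icc.mpr hx.2.le)
    rw [Real.norm_eq_abs] at hseg
    have hw0 : (0:ℝ) ≤ (t - x) ^ (-β) := Real.rpow_nonneg hxt.le _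
    have habs : |K x| = (t - x) ^ (-β) * |g t - g x| := by
      simp only [hKdef]
      rw [abs_mul, abs_of_nonneg hw0]
    rw [habs]
    calc (t - x) ^ (-β) * |g t - g x| ≤ (t - x) ^ (-β) * (M * (t - x)) :=
          mul_le_mul_of_nonneg_left hseg hw0
      _ = M * (t - x) ^ (1 - β) := by
          rw [show (1:ℝ) - β = -β + 1 by ring, Real.rpow_add hxt, Real.rpow_one]
          ring
  -- H := F - K tends to 0 at t⁻
  have hHt : Tendsto (fun x => F x - K x) (nhdsWithin t (Set.Iio t)) (nhds 0) := by
    have hbnd : ∀ᶠ x in nhdsWithin t (Set.Iio t),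
        ‖F x - K x‖ ≤ (M / (1 - β) + M) * (t - x) ^ (1 - β) := by
      filter_upwards [Ioo_mem_nhdsLT_of_mem (right_mem_Ioc.mpr ht0)] with x hx
      have h1 := hFb x hx
      have h2 := hKb x hx
      refine (norm_sub_le _ _).trans ?_
      rw [Real.norm_eq_abs, Real.norm_eq_abs]
      have he : (M / (1 - β) + M) * (t - x) ^ (1 - β)
          = M * ((t - x) ^ (1 - β) / (1 - β)) + M * (t - x) ^ (1 - β) := by ring
      rw [he]
      linarith
    have hrpow0 : Tendsto (fun x => (M / (1 - β) + M) * (t - x) ^ (1 - β))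
        (nhdsWithin t (Set.Iio t)) (nhds 0) := by
      have h1 : Tendsto (fun x : ℝ => t - x) (nhds t) (nhds 0) := by
        have := (continuous_sub_left t).tendsto t
        simpa using this
      have h2 : ContinuousAt (fun y : ℝ => y ^ (1 - β)) 0 :=
        Real.continuousAt_rpow_const _ _ (Or.inr (by linarith))
      have h3 : Tendsto (fun x : ℝ => (t - x) ^ (1 - β)) (nhds t) (nhds 0) := by
        have := h2.tendsto.comp h1
        simpa [Function.comp_def, Real.zero_rpow (by intro hcon; linarith : (1:ℝ) - β ≠ 0)]
          using this
      have h4 := h3.const_mul (M / (1 - β) + M)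
      rw [mul_zero] at h4
      exact h4.mono_left nhdsWithin_le_nhds
    exact squeeze_zero_norm' hbnd hrpow0
  -- H nonneg on Ioo 0 t
  have hH0 : ∀ r ∈ Set.Ioo (0:ℝ) t, 0 ≤ F r - K r := by
    intro r hr
    have hsub : Set.Ico r t ⊆ Set.Ioo (0:ℝ) t := fun x hx => ⟨lt_of_lt_of_le hr.1 hx.1, hx.2⟩
    have hanti : AntitoneOn (fun x => F x - K x) (Set.Ico r t) := by
      apply antitoneOn_of_deriv_nonpos (convex_Ico r t)
      · intro x hx
        exact ((hHderiv x (hsub hx)).continuousAt).continuousWithinAt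
      · intro x hx
        rw [interior_Ico] at hx
        exact ((hHderiv x (hsub (Set.Ioo_subset_Ico_self hx))).differentiableAt).differentiableWithinAt
      · intro x hx
        rw [interior_Ico] at hx
        have hx' := hsub (Set.Ioo_subset_Ico_self hx)
        rw [(hHderiv x hx').deriv]
        have h1 : (0:ℝ) ≤ (t - x) ^ (-β - 1) := Real.rpow_nonneg (by linarith [hx'.2]) _
        have h2 : 0 ≤ g t - g x := sub_nonneg.mpr (hgle x ⟨hx'.1.le, hx'.2.le⟩)
        have h3 : 0 ≤ β * (t - x) ^ (-β - 1) * (g t - g x) := by positivity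
        linarith
    have hev : ∀ᶠ x in nhdsWithin t (Set.Iio t), F x - K x ≤ F r - K r := by
      filter_upwards [Ico_mem_nhdsLT_of_mem (right_mem_Ioc.mpr hr.2)] with x hx
      exact hanti (Set.left_mem_Ico.mpr hr.2) hx hx.1
    exact le_of_tendsto hHt hev
  have hK0 : ∀ r ∈ Set.Ioo (0:ℝ) t, 0 ≤ K r := by
    intro r hr
    have h1 : (0:ℝ) ≤ (t - r) ^ (-β) := Real.rpow_nonneg (by linarith [hr.2]) _
    have h2 : 0 ≤ g t - g r := sub_nonneg.mpr (hgle r ⟨hr.1.le, hr.2.le⟩)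
    simp only [hKdef]
    exact mul_nonneg h1 h2
  -- split the integral
  have hsplit : ∀ r ∈ Set.Ioo (0:ℝ) t,
      (∫ s in (0:ℝ)..r, G s) ≤ ∫ s in (0:ℝ)..t, G s := by
    intro r hr
    have hadd := intervalIntegral.integral_add_adjacent_intervals
      (hGint 0 r le_rfl hr.1.le hr.2.le) (hGint r t hr.1.le hr.2.le le_rfl)
    have h5 : 0 ≤ (∫ s in r..t, G s) - K r := hH0 r hr
    have h6 : 0 ≤ K r := hK0 r hr
    linarith [hadd]
  -- A r → 0 as r → 0⁺
  have hAtend : Tendsto (fun r => ∫ s in (0:ℝ)..r, G s) (nhdsWithin 0 (Set.Ioi 0)) (nhds 0) := by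
    have hAbound : ∀ᶠ r in nhdsWithin 0 (Set.Ioi 0),
        ‖∫ s in (0:ℝ)..r, G s‖ ≤ (M * (t / 2) ^ (-β)) * |r| := by
      filter_upwards [Ioo_mem_nhdsGT_of_mem
        (Set.left_mem_Ico.mpr (by linarith : (0:ℝ) < t / 2))] with r hr
      have hb : ∀ s ∈ Set.uIoc (0:ℝ) r, ‖G s‖ ≤ M * (t / 2) ^ (-β) := by
        intro s hs
        rw [Set.uIoc_of_le hr.1.le] at hs
        have h1 : t / 2 ≤ t - s := by linarith [hs.2, hr.2]
        have h2 : (t - s) ^ (-β) ≤ (t / 2) ^ (-β) :=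
          Real.rpow_le_rpow_of_nonpos (by linarith) h1 (by linarith)
        have hw0 : (0:ℝ) ≤ (t - s) ^ (-β) := Real.rpow_nonneg (by linarith) _
        have hMs := hMb s ⟨hs.1.le, by linarith [hs.2, hr.2]⟩
        rw [Real.norm_eq_abs]
        simp only [hGdef, hwdef]
        rw [abs_mul, abs_of_nonneg hw0]
        exact mul_le_mul hMs h2 hw0 hM0'
      have h := intervalIntegral.norm_integral_le_of_norm_le_const hb
      simpa using h
    have hlin : Tendsto (fun r : ℝ => (M * (t / 2) ^ (-β)) * |r|)
        (nhdsWithin 0 (Set.Ioi 0)) (nhds 0) := by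
      have hcont : Continuous fun r : ℝ => (M * (t / 2) ^ (-β)) * |r| :=
        continuous_const.mul continuous_abs
      have := hcont.tendsto (0:ℝ)
      simp only [abs_zero, mul_zero] at this
      exact this.mono_left nhdsWithin_le_nhds
    exact squeeze_zero_norm' hAbound hlin
  have hfinal : 0 ≤ ∫ s in (0:ℝ)..t, G s := by
    have hev : ∀ᶠ r in nhdsWithin 0 (Set.Ioi 0),
        (∫ s in (0:ℝ)..r, G s) ≤ ∫ s in (0:ℝ)..t, G s := by
      filter_upwards [Ioo_mem_nhdsGT_of_mem (Set.left_mem_Ico.mpr ht0)] with r hr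
      exact hsplit r hr
    exact le_of_tendsto hAtend hev
  rw [intervalIntegral.integral_of_le ht0.le, MeasureTheory.integral_Ioc_eq_integral_Ioo] at hfinal
  simp only [hGdef, hwdef] at hfinal
  exact hfinal

/-- Convexity inequality for the forward Caputo derivative:
`∂^β_{(0,t]}(Φ∘u)(t) ≤ Φ'(u(t)) ∂^β_{(0,t]}u(t)` for convex differentiable `Φ`. -/
theorem caputo_convex_chain (β τ : ℝ) (hβ : β ∈ Set.Ioo (0:ℝ) 1) (hτ : 0 < τ)
    (u u' : ℝ → ℝ)
    (hu : ∀ t ∈ Set.Icc 0 τ, HasDerivAt u (u' t) t)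
    (hu' : ContinuousOn u' (Set.Icc 0 τ))
    (Φ Φ' : ℝ → ℝ)
    (hΦconv : ConvexOn ℝ Set.univ Φ)
    (hΦ : ∀ x, HasDerivAt Φ (Φ' x) x)
    (hΦ' : Continuous Φ') :
    ∀ t ∈ Set.Ioc 0 τ,
      (1 / Real.Gamma (1 - β)) *
          (∫ s in Set.Ioo 0 t, deriv (fun r => Φ (u r)) s * (t - s) ^ (-β))
        ≤ Φ' (u t) *
            ((1 / Real.Gamma (1 - β)) * ∫ s in Set.Ioo 0 t, u' s * (t - s) ^ (-β)) := by
  obtain ⟨hβ0, hβ1⟩ := hβ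
  intro t ht
  obtain ⟨ht0, htτ⟩ := ht
  have hIccsub : Set.Icc (0:ℝ) t ⊆ Set.Icc 0 τ := Set.Icc_subset_Icc le_rfl htτ
  have hucont : ContinuousOn u (Set.Icc 0 τ) := fun s hs =>
    ((hu s hs).continuousAt).continuousWithinAt
  set c : ℝ := Φ' (u t) with hcdef
  have hgderiv : ∀ s ∈ Set.Icc (0:ℝ) t,
      HasDerivAt (fun r => c * u r - Φ (u r)) ((c - Φ' (u s)) * u' s) s := by
    intro s hs
    have h1 := (hu s (hIccsub hs)).const_mul c
    have h2 := (hΦ (u s)).comp s (hu s (hIccsub hs))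
    have h3 := h1.sub h2
    refine h3.congr_deriv ?_
    ring
  have hg'cont : ContinuousOn (fun s => (c - Φ' (u s)) * u' s) (Set.Icc 0 t) :=
    (continuousOn_const.sub (hΦ'.comp_continuousOn (hucont.mono hIccsub))).mul
      (hu'.mono hIccsub)
  have hgle : ∀ s ∈ Set.Icc (0:ℝ) t,
      (fun r => c * u r - Φ (u r)) s ≤ (fun r => c * u r - Φ (u r)) t := by
    intro s _
    have h := caputo_grad_ineq Φ Φ' hΦconv hΦ (u s) (u t)
    have hexp : Φ' (u t) * (u s - u t) = Φ' (u t) * u s - Φ' (u t) * u t := by ring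
    rw [hexp] at h
    show c * u s - Φ (u s) ≤ c * u t - Φ (u t)
    rw [hcdef]
    linarith
  have hkey : 0 ≤ ∫ s in Set.Ioo (0:ℝ) t, (c - Φ' (u s)) * u' s * (t - s) ^ (-β) :=
    caputo_key hβ0 hβ1 ht0 (fun r => c * u r - Φ (u r))
      (fun s => (c - Φ' (u s)) * u' s) hgderiv hg'cont hgle
  have hi1 : IntegrableOn (fun s => u' s * (t - s) ^ (-β)) (Set.Ioo 0 t) volume := by
    have h := caputo_mul_int hβ0 hβ1 u' (hu'.mono hIccsub) le_rfl ht0.le le_rfl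
    exact ((intervalIntegrable_iff_integrableOn_Ioc_of_le ht0.le).mp h).mono_set
      Set.Ioo_subset_Ioc_self
  have hi2 : IntegrableOn (fun s => Φ' (u s) * u' s * (t - s) ^ (-β)) (Set.Ioo 0 t) volume := by
    have h := caputo_mul_int hβ0 hβ1 (fun s => Φ' (u s) * u' s)
      ((hΦ'.comp_continuousOn (hucont.mono hIccsub)).mul (hu'.mono hIccsub))
      le_rfl ht0.le le_rfl
    exact ((intervalIntegrable_iff_integrableOn_Ioc_of_le ht0.le).mp h).mono_set
      Set.Ioo_subset_Ioc_self
  have hsplit : (∫ s in Set.Ioo (0:ℝ) t, (c - Φ' (u s)) * u' s * (t - s) ^ (-β))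
      = c * (∫ s in Set.Ioo (0:ℝ) t, u' s * (t - s) ^ (-β))
        - ∫ s in Set.Ioo (0:ℝ) t, Φ' (u s) * u' s * (t - s) ^ (-β) := by
    rw [show c * (∫ s in Set.Ioo (0:ℝ) t, u' s * (t - s) ^ (-β))
        = ∫ s in Set.Ioo (0:ℝ) t, c * (u' s * (t - s) ^ (-β)) from
      (integral_const_mul c _).symm]
    rw [← integral_sub (hi1.const_mul c) hi2]
    exact integral_congr_ae (Filter.Eventually.of_forall fun s => by ring)
  have hderiv_eq : ∀ s ∈ Set.Ioo (0:ℝ) t,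
      deriv (fun r => Φ (u r)) s * (t - s) ^ (-β) = Φ' (u s) * u' s * (t - s) ^ (-β) := by
    intro s hs
    have h2 := (hΦ (u s)).comp s (hu s ⟨hs.1.le, hs.2.le.trans htτ⟩)
    have h3 : HasDerivAt (fun r => Φ (u r)) (Φ' (u s) * u' s) s := h2
    rw [h3.deriv]
  have hre : (∫ s in Set.Ioo (0:ℝ) t, deriv (fun r => Φ (u r)) s * (t - s) ^ (-β))
      = ∫ s in Set.Ioo (0:ℝ) t, Φ' (u s) * u' s * (t - s) ^ (-β) :=
    setIntegral_congr_fun measurableSet_Ioo hderiv_eq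
  rw [hre]
  have hC : 0 < Real.Gamma (1 - β) := Real.Gamma_pos_of_pos (by linarith)
  have hC' : 0 ≤ 1 / Real.Gamma (1 - β) := by positivity
  have hle : (∫ s in Set.Ioo (0:ℝ) t, Φ' (u s) * u' s * (t - s) ^ (-β))
      ≤ c * ∫ s in Set.Ioo (0:ℝ) t, u' s * (t - s) ^ (-β) := by
    rw [hsplit] at hkey
    linarith
  calc (1 / Real.Gamma (1 - β)) * ∫ s in Set.Ioo (0:ℝ) t, Φ' (u s) * u' s * (t - s) ^ (-β)
      ≤ (1 / Real.Gamma (1 - β)) * (c * ∫ s in Set.Ioo (0:ℝ) t, u' s * (t - s) ^ (-β)) :=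
        mul_le_mul_of_nonneg_left hle hC'
    _ = c * ((1 / Real.Gamma (1 - β)) * ∫ s in Set.Ioo (0:ℝ) t, u' s * (t - s) ^ (-β)) := by
        ring
end

section
/- Let β ∈ (0,1). For a real-valued function v ∈ C¹([0,t]) attaining its maximum over [0,t] at the endpoint t, the forward Caputo derivative satisfies ∂^β_{(0,t]} v(t) ≥ 0, i.e. (1/Γ(1−β)) ∫₀ᵗ v'(τ)(t−τ)^{−β} dτ ≥ 0 whenever v(t) = max_{[0,t]} v. -/
open Set MeasureTheory Real Filter Topology

/-- Sign of the forward Caputo derivative at an endpoint maximum: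
if `v ∈ C¹([0,t])` attains its maximum over `[0,t]` at `t`, then
`∂^β_{(0,t]}v(t) ≥ 0`. -/
theorem caputo_nonneg_at_max (β t : ℝ) (hβ : β ∈ Set.Ioo (0:ℝ) 1) (ht : 0 < t)
    (v v' : ℝ → ℝ)
    (hv : ∀ τ ∈ Set.Icc 0 t, HasDerivAt v (v' τ) τ)
    (hv' : ContinuousOn v' (Set.Icc 0 t))
    (hmax : ∀ τ ∈ Set.Icc 0 t, v τ ≤ v t) :
    0 ≤ (1 / Real.Gamma (1 - β)) * ∫ τ in Set.Ioo 0 t, v' τ * (t - τ) ^ (-β) := by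
  obtain ⟨hβ0, hβ1⟩ := hβ
  set w : ℝ → ℝ := fun τ => (t - τ) ^ (-β) with hwdef
  set f : ℝ → ℝ := fun τ => v' τ * w τ with hfdef
  -- a bound on |v'|
  obtain ⟨M, hM⟩ := (isCompact_Icc : IsCompact (Icc (0:ℝ) t)).exists_bound_of_continuousOn hv'
  have hM0 : 0 ≤ M := le_trans (norm_nonneg _) (hM 0 ⟨le_rfl, ht.le⟩)
  -- integrability of the weight
  have hwint : IntervalIntegrable w volume 0 t := by
    have h1 : IntervalIntegrable (fun x : ℝ => x ^ (-β)) volume 0 t :=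
      intervalIntegral.intervalIntegrable_rpow' (by linarith)
    have h2 := (h1.comp_sub_left t).symm
    simpa using h2
  have hfint : IntervalIntegrable f volume 0 t :=
    hwint.continuousOn_mul (by simpa [uIcc_of_le ht.le] using hv')
  -- v is `M`-Lipschitz on `[0,t]`
  have hlip : ∀ s ∈ Icc (0:ℝ) t, -(M * (t - s)) ≤ v s - v t := by
    intro s hs
    have := (convex_Icc (0:ℝ) t).norm_image_sub_le_of_norm_hasDerivWithin_le
      (f := v) (f' := v') (fun x hx => (hv x hx).hasDerivWithinAt)
      (fun x hx => hM x hx) hs ⟨ht.le, le_rfl⟩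
    rw [Real.norm_eq_abs, Real.norm_eq_abs] at this
    have h1 : |v t - v s| ≤ M * (t - s) := by
      calc |v t - v s| ≤ M * |t - s| := this
        _ = M * (t - s) := by rw [abs_of_nonneg (by linarith [hs.2])]
    have := abs_le.mp h1
    linarith [this.1, this.2]
  -- the key lower bound for the truncated integral
  have key : ∀ s ∈ Ioo (0:ℝ) t, -(M * (t - s) ^ (1 - β)) ≤ ∫ τ in (0:ℝ)..s, f τ := by
    intro s hs
    have hts : 0 < t - s := by linarith [hs.2]
    set w' : ℝ → ℝ := fun τ => β * (t - τ) ^ (-β - 1) with hw'def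
    have hderiv : ∀ τ ∈ Icc (0:ℝ) s, HasDerivAt w (w' τ) τ := by
      intro τ hτ
      have hτt : 0 < t - τ := by linarith [hτ.2, hs.2]
      have h1 : HasDerivAt (fun x : ℝ => t - x) (-1) τ := (hasDerivAt_id τ).const_sub t
      have h2 : HasDerivAt (fun y : ℝ => y ^ (-β)) ((-β) * (t - τ) ^ (-β - 1)) (t - τ) :=
        Real.hasDerivAt_rpow_const (Or.inl hτt.ne')
      have h3 := h2.comp τ h1
      have h4 : (-β) * (t - τ) ^ (-β - 1) * (-1) = w' τ := by simp only [hw'def]; ring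
      rw [h4] at h3
      exact h3
    have hw'cont : ContinuousOn w' (Set.uIcc 0 s) := by
      rw [uIcc_of_le hs.1.le]
      refine continuousOn_const.mul (ContinuousOn.rpow_const ?_ ?_)
      · exact continuousOn_const.sub continuousOn_id
      · intro τ hτ
        left
        have : 0 < t - τ := by linarith [hτ.2, hs.2]
        exact this.ne'
    have hw'int : IntervalIntegrable w' volume 0 s := hw'cont.intervalIntegrable
    have hvsub : Icc (0:ℝ) s ⊆ Icc 0 t := Icc_subset_Icc le_rfl hs.2.le
    have hvcont : ContinuousOn v (Set.uIcc 0 s) := by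
      rw [uIcc_of_le hs.1.le]
      exact fun x hx => ((hv x (hvsub hx)).continuousAt).continuousWithinAt
    have hwcont : ContinuousOn w (Set.uIcc 0 s) := by
      rw [uIcc_of_le hs.1.le]
      refine ContinuousOn.rpow_const (continuousOn_const.sub continuousOn_id) ?_
      intro τ hτ
      left
      have : 0 < t - τ := by linarith [hτ.2, hs.2]
      exact this.ne'
    have hv'cont : ContinuousOn v' (Set.uIcc 0 s) := by
      rw [uIcc_of_le hs.1.le]; exact hv'.mono hvsub
    have hv'int : IntervalIntegrable v' volume 0 s := hv'cont.intervalIntegrable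
    have hIoo : Ioo (min (0:ℝ) s) (max 0 s) = Ioo 0 s := by
      rw [min_eq_left hs.1.le, max_eq_right hs.1.le]
    have hIBP := intervalIntegral.integral_mul_deriv_eq_deriv_mul_of_hasDerivAt
      (a := (0:ℝ)) (b := s) (u := w) (v := v) (u' := w') (v' := v')
      hwcont hvcont
      (fun x hx => hderiv x (by rw [hIoo] at hx; exact ⟨hx.1.le, hx.2.le⟩))
      (fun x hx => hv x (by rw [hIoo] at hx; exact hvsub ⟨hx.1.le, hx.2.le⟩))
      hw'int hv'int
    have hfcomm : (∫ τ in (0:ℝ)..s, f τ) = ∫ x in (0:ℝ)..s, w x * v' x := by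
      apply intervalIntegral.integral_congr
      intro x _
      simp [hfdef, mul_comm]
    -- ∫ w' x = w s - w 0
    have hFTC : (∫ x in (0:ℝ)..s, w' x) = w s - w 0 :=
      intervalIntegral.integral_eq_sub_of_hasDerivAt
        (fun x hx => hderiv x (by rwa [uIcc_of_le hs.1.le] at hx)) hw'int
    -- monotone bound on ∫ w' * v
    have hw'vint : IntervalIntegrable (fun x => w' x * v x) volume 0 s :=
      (hw'cont.mul hvcont).intervalIntegrable
    have hw'tvint : IntervalIntegrable (fun x => w' x * v t) volume 0 s :=
      (hw'cont.mul continuousOn_const).intervalIntegrable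
    have hmono : (∫ x in (0:ℝ)..s, w' x * v x) ≤ ∫ x in (0:ℝ)..s, w' x * v t := by
      apply intervalIntegral.integral_mono_on hs.1.le hw'vint hw'tvint
      intro x hx
      have hw'pos : 0 ≤ w' x := by
        have hxt : 0 < t - x := by linarith [hx.2, hs.2]
        have : (0:ℝ) ≤ (t - x) ^ (-β - 1) := Real.rpow_nonneg hxt.le _
        positivity
      exact mul_le_mul_of_nonneg_left (hmax x (hvsub hx)) hw'pos
    have hconst : (∫ x in (0:ℝ)..s, w' x * v t) = (w s - w 0) * v t := by
      rw [intervalIntegral.integral_mul_const, hFTC]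
    -- put everything together
    have hws : 0 ≤ w s := Real.rpow_nonneg hts.le _
    have hw0 : 0 ≤ w 0 := by
      have : (0:ℝ) ≤ t - 0 := by linarith
      exact Real.rpow_nonneg this _
    have hvts : -(M * (t - s)) ≤ v s - v t := hlip s ⟨hs.1.le, hs.2.le⟩
    have hv0 : 0 ≤ v t - v 0 := by
      have := hmax 0 ⟨le_rfl, ht.le⟩; linarith
    have hrw : (t - s) ^ (1 - β) = (t - s) * w s := by
      have : (1 : ℝ) - β = 1 + (-β) := by ring
      rw [this, Real.rpow_add hts, Real.rpow_one]
    calc -(M * (t - s) ^ (1 - β))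
        = w s * (-(M * (t - s))) + 0 := by rw [hrw]; ring
      _ ≤ w s * (v s - v t) + w 0 * (v t - v 0) := by
          have h1 : w s * (-(M * (t - s))) ≤ w s * (v s - v t) :=
            mul_le_mul_of_nonneg_left hvts hws
          have h2 : (0:ℝ) ≤ w 0 * (v t - v 0) := mul_nonneg hw0 hv0
          linarith
      _ = w s * v s - w 0 * v 0 - (w s - w 0) * v t := by ring
      _ ≤ w s * v s - w 0 * v 0 - ∫ x in (0:ℝ)..s, w' x * v x := by
          rw [← hconst] at *; linarith [hmono, hconst]
      _ = ∫ τ in (0:ℝ)..s, f τ := by rw [hfcomm, hIBP]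
  -- pass to the limit s → t⁻
  have hfI : IntegrableOn f (Icc 0 t) := by
    rw [integrableOn_Icc_iff_integrableOn_Ioc]
    exact (intervalIntegrable_iff_integrableOn_Ioc_of_le ht.le).mp hfint
  set G : ℝ → ℝ := fun x => ∫ τ in Ioc 0 x, f τ with hGdef
  have hGcont : ContinuousOn G (Icc 0 t) := intervalIntegral.continuousOn_primitive hfI
  have hne : (𝓝[Ioo 0 t] t).NeBot := by
    apply mem_closure_iff_nhdsWithin_neBot.mp
    rw [closure_Ioo ht.ne]
    exact ⟨ht.le, le_rfl⟩
  have hGt : Tendsto G (𝓝[Ioo 0 t] t) (𝓝 (G t)) :=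
    (hGcont t ⟨ht.le, le_rfl⟩).mono_left (nhdsWithin_mono t Ioo_subset_Icc_self)
  have h0 : Tendsto (fun s => -(M * (t - s) ^ (1 - β))) (𝓝[Ioo 0 t] t) (𝓝 0) := by
    have h1 : Tendsto (fun s : ℝ => t - s) (𝓝[Ioo 0 t] t) (𝓝 0) := by
      have h1' : Tendsto (fun s : ℝ => t - s) (𝓝 t) (𝓝 (t - t)) :=
        ((continuous_const (y := t)).sub continuous_id).tendsto t
      rw [sub_self] at h1'
      exact h1'.mono_left nhdsWithin_le_nhds
    have h2 : Tendsto (fun s : ℝ => (t - s) ^ (1 - β)) (𝓝[Ioo 0 t] t) (𝓝 0) := by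
      have hc : ContinuousAt (fun y : ℝ => y ^ (1 - β)) 0 :=
        Real.continuousAt_rpow_const 0 (1 - β) (Or.inr (by linarith))
      have := hc.tendsto.comp h1
      simpa [Function.comp_def, Real.zero_rpow (by linarith : (1:ℝ) - β ≠ 0)] using this
    have h3 := (h2.const_mul M).neg
    simpa using h3
  have hbound : ∀ᶠ s in 𝓝[Ioo 0 t] t, -(M * (t - s) ^ (1 - β)) ≤ G s := by
    filter_upwards [self_mem_nhdsWithin] with s hs
    have : G s = ∫ τ in (0:ℝ)..s, f τ := by
      rw [hGdef, intervalIntegral.integral_of_le hs.1.le]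
    rw [this]
    exact key s hs
  haveI := hne
  have hGt0 : 0 ≤ G t := le_of_tendsto_of_tendsto h0 hGt hbound
  have hIoo : (∫ τ in Set.Ioo 0 t, v' τ * (t - τ) ^ (-β)) = G t := by
    rw [hGdef]
    exact (integral_Ioc_eq_integral_Ioo).symm
  rw [hIoo]
  have hΓ : 0 < Real.Gamma (1 - β) := Real.Gamma_pos_of_pos (by linarith)
  positivity
end
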